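/- arXiv:2106.15175 — 5 statements merged into one kernel-verified Lean document; each statement's English description precedes it below -/
import Mathlib

section
/- For every ε > 0 there exists t₀ ∈ ℕ such that for every integer t ≥ t₀ there exist a finite simple graph F that is a forest (contains no cycles) and a partition 𝒫 of the vertex set of F such that: (i) every block of 𝒫 has size at least t; (ii) for every block B of 𝒫, the number of edges of F with exactly one endpoint in B is at most (1/4 + ε)·t·|B|; and (iii) there is no independent transversal of 𝒫 in F. -/
namespace Stmt0

open SimpleGraph

lemma acyclic_of_parent {V : Type} (G : SimpleGraph V) (h : V → ℕ) (π : V → V)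
    (H : ∀ v w, G.Adj v w → (h w = h v + 1 ∧ π w = v) ∨ (h v = h w + 1 ∧ π v = w)) :
    G.IsAcyclic := by
  intro u c hc
  classical
  obtain ⟨m, hm', hmax'⟩ := Finset.exists_max_image c.support.toFinset h
    ⟨u, List.mem_toFinset.2 c.start_mem_support⟩
  rw [List.mem_toFinset] at hm'
  have hmax : ∀ v ∈ c.support, h v ≤ h m := fun v hv => hmax' v (List.mem_toFinset.2 hv)
  have hcy : (c.rotate m hm').IsCycle := hc.rotate hm'
  have hsupp : ∀ v ∈ (c.rotate m hm').support.tail, h v ≤ h m := by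
    intro v hv
    exact hmax v (List.mem_of_mem_tail (((Walk.support_rotate c m hm').mem_iff).1 hv))
  have h3 : 3 ≤ (c.rotate m hm').length := hcy.three_le_length
  obtain ⟨x, hadj, q, hq⟩ := Walk.not_nil_iff.1 hcy.not_nil
  rw [hq] at hcy h3 hsupp
  rw [Walk.cons_isCycle_iff] at hcy
  obtain ⟨hpath, he⟩ := hcy
  rw [Walk.length_cons] at h3
  have hqnn : ¬ q.reverse.Nil := by
    rw [Walk.not_nil_iff_lt_length, Walk.length_reverse]; omega
  set y := q.reverse.getVert 1 with hy
  have hadj2 : G.Adj m y := q.reverse.adj_snd hqnn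
  have hedge : s(m, y) ∈ q.reverse.edges := by
    rw [← Walk.cons_tail_eq q.reverse hqnn, Walk.edges_cons]
    exact List.mem_cons_self
  have hey : s(m, y) ∈ q.edges := by rwa [Walk.edges_reverse, List.mem_reverse] at hedge
  have hxy : x ≠ y := by
    intro e
    apply he
    rw [← e] at hey
    exact hey
  have hyc : y ∈ q.support := q.snd_mem_support_of_mem_edges hey
  have hxc : x ∈ q.support := q.start_mem_support
  rw [Walk.support_cons] at hsupp
  have hx : h x ≤ h m := hsupp x (by simpa using hxc)
  have hy' : h y ≤ h m := hsupp y (by simpa using hyc)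
  have e1 : π m = x := by
    rcases H m x hadj with ⟨h1, _⟩ | ⟨_, h2⟩
    · omega
    · exact h2
  have e2 : π m = y := by
    rcases H m y hadj2 with ⟨h1, _⟩ | ⟨_, h2⟩
    · omega
    · exact h2
  exact hxy (e1 ▸ e2)

noncomputable def yseq (d : ℝ) : ℕ → ℝ
  | 0 => 1/4
  | j+1 => if 1 - yseq d j ≤ 1/4 + d then 1 else (1/4 + d)/(1 - yseq d j)

lemma yseq_mem (d : ℝ) (hd : 0 < d) : ∀ j, 0 ≤ yseq d j ∧ yseq d j ≤ 1 := by
  intro j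
  induction j with
  | zero => norm_num [yseq]
  | succ j ih =>
    rw [yseq]
    split
    · norm_num
    · rename_i hlt
      push_neg at hlt
      have h1 : (0:ℝ) < 1/4 + d := by linarith
      have h2 : (0:ℝ) < 1 - yseq d j := by linarith
      constructor
      · positivity
      · rw [div_le_one h2]; linarith

lemma yseq_key (d : ℝ) (hd : 0 < d) (j : ℕ) :
    (1 - yseq d j) * yseq d (j+1) ≤ 1/4 + d := by
  have hm := yseq_mem d hd j
  rw [yseq]
  split
  · rename_i hle; rw [mul_one]; exact hle
  · rename_i hlt
    push_neg at hlt
    have h2 : (1:ℝ) - yseq d j ≠ 0 := by linarith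
    rw [mul_div_cancel₀ _ h2]

lemma yseq_one_succ (d : ℝ) (hd : 0 < d) (j : ℕ) (h : yseq d j = 1) : yseq d (j+1) = 1 := by
  rw [yseq, h]; rw [if_pos (by linarith)]

lemma yseq_growth (d : ℝ) (hd : 0 < d) (j : ℕ) :
    yseq d (j+1) = 1 ∨ yseq d j + d ≤ yseq d (j+1) := by
  have hm := yseq_mem d hd j
  rw [yseq]
  split
  · exact Or.inl rfl
  · rename_i hlt
    push_neg at hlt
    right
    have h2 : (0:ℝ) < 1 - yseq d j := by linarith
    rw [le_div_iff₀ h2]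
    nlinarith [sq_nonneg (yseq d j - 1/2)]

lemma yseq_eventually_one (d : ℝ) (hd : 0 < d) : ∃ K, yseq d K = 1 := by
  have key : ∀ j, yseq d j = 1 ∨ 1/4 + j * d ≤ yseq d j := by
    intro j
    induction j with
    | zero => right; simp [yseq]
    | succ j ih =>
      rcases ih with h | h
      · exact Or.inl (yseq_one_succ d hd j h)
      · rcases yseq_growth d hd j with h' | h'
        · exact Or.inl h'
        · right; push_cast; nlinarith
  refine ⟨⌈1/d⌉₊, ?_⟩
  rcases key ⌈1/d⌉₊ with h | h
  · exact h
  · exfalso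
    have h1 : (1:ℝ)/d ≤ (⌈1/d⌉₊ : ℝ) := Nat.le_ceil _
    have h2 : (1:ℝ) ≤ (⌈1/d⌉₊ : ℝ) * d := by
      rw [← div_le_iff₀ hd] at *
      · linarith
    have := (yseq_mem d hd ⌈1/d⌉₊).2
    linarith


lemma ncard_le_card_of_inj {α β : Type*} (s : Set α) (F : Finset β) (φ : α → β)
    (hmap : ∀ a ∈ s, φ a ∈ F) (hinj : Set.InjOn φ s) : s.ncard ≤ F.card := by
  have h := Set.ncard_le_ncard_of_injOn (t := (F : Set β)) φ (fun a ha => hmap a ha) hinj F.finite_toSet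
  rwa [Set.ncard_coe_finset] at h





section Constr

variable (t L : ℕ) (b : ℕ → ℕ)

def Ok (x : Fin (L+1) × (Fin (L+1) → Fin t)) : Prop :=
  (∀ i : Fin (L+1), (x.1 : ℕ) < (i : ℕ) → (x.2 i : ℕ) = 0) ∧
  (∀ i : Fin (L+1), (i : ℕ) < (x.1 : ℕ) → b i ≤ (x.2 i : ℕ))

def Vt : Type := {x : Fin (L+1) × (Fin (L+1) → Fin t) // Ok t L b x}

instance : Finite (Vt t L b) := by unfold Vt; infer_instance

noncomputable instance : Fintype (Vt t L b) := Fintype.ofFinite _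

variable {t L b}

def lvl (v : Vt t L b) : ℕ := v.1.1

def co (v : Vt t L b) (i : ℕ) : ℕ := if h : i < L + 1 then (v.1.2 ⟨i, h⟩ : ℕ) else 0

lemma lvl_le (v : Vt t L b) : lvl v ≤ L := Nat.lt_succ_iff.1 v.1.1.isLt

lemma co_lt (ht : 0 < t) (v : Vt t L b) (i : ℕ) : co v i < t := by
  unfold co
  split
  · exact (v.1.2 _).isLt
  · exact ht

lemma co_pad (v : Vt t L b) (i : ℕ) (hi : lvl v < i) : co v i = 0 := by
  unfold co
  split
  · exact v.2.1 _ hi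
  · rfl

lemma co_act (v : Vt t L b) (i : ℕ) (hi : i < lvl v) : b i ≤ co v i := by
  have hiL : i < L + 1 := by have := lvl_le v; omega
  unfold co
  rw [dif_pos hiL]
  exact v.2.2 ⟨i, hiL⟩ hi

lemma Vt.ext {v w : Vt t L b} (h1 : lvl v = lvl w) (h2 : ∀ i ≤ lvl v, co v i = co w i) :
    v = w := by
  apply Subtype.ext
  apply Prod.ext
  · exact Fin.ext h1
  · funext i
    apply Fin.ext
    by_cases hi : (i : ℕ) ≤ lvl v
    · have h3 := h2 i hi
      unfold co at h3
      rw [dif_pos i.isLt, dif_pos i.isLt] at h3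
      simpa using h3
    · push_neg at hi
      have p1 := v.2.1 i hi
      have p2 := w.2.1 i (show lvl w < (i : ℕ) by omega)
      omega

variable (t L b) in
def mk (j : ℕ) (hj : j ≤ L) (s : ℕ → ℕ) (hlt : ∀ i, s i < t) (hpad : ∀ i, j < i → s i = 0)
    (hact : ∀ i, i < j → b i ≤ s i) : Vt t L b :=
  ⟨(⟨j, by omega⟩, fun i => ⟨s i, hlt i⟩), by
    constructor
    · intro i hi; exact hpad i hi
    · intro i hi; exact hact i hi⟩

@[simp] lemma lvl_mk {j hj s hlt hpad hact} : lvl (mk t L b j hj s hlt hpad hact) = j := rfl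

@[simp] lemma co_mk {j hj s hlt hpad hact} (i : ℕ) : co (mk t L b j hj s hlt hpad hact) i = s i := by
  unfold co mk
  split
  · rfl
  · rename_i h
    exact (hpad i (by omega)).symm

def Rel (v w : Vt t L b) : Prop :=
  lvl w = lvl v + 1 ∧ (∀ i ≤ lvl v, co v i = co w i) ∧ co w (lvl w) < b (lvl w)

variable (t L b) in
def Gr : SimpleGraph (Vt t L b) where
  Adj v w := Rel v w ∨ Rel w v
  symm := by constructor; intro v w h; exact h.symm
  loopless := by
    constructor; intro v h
    rcases h with ⟨h, -⟩ | ⟨h, -⟩ <;> omega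

def par (ht : 0 < t) (v : Vt t L b) : Vt t L b :=
  mk t L b (lvl v - 1) (by have := lvl_le v; omega)
    (fun i => if i < lvl v then co v i else 0)
    (fun i => by split; exacts [co_lt ht v i, ht])
    (fun i hi => by split; exacts [by omega, rfl])
    (fun i hi => by rw [if_pos (by omega)]; exact co_act v i (by omega))

@[simp] lemma lvl_par (ht : 0 < t) (v : Vt t L b) : lvl (par ht v) = lvl v - 1 := rfl

lemma co_par (ht : 0 < t) (v : Vt t L b) (i : ℕ) :
    co (par ht v) i = if i < lvl v then co v i else 0 := co_mk i

lemma rel_par (ht : 0 < t) {v w : Vt t L b} (h : Rel v w) : par ht w = v := by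
  obtain ⟨hl, hpre, -⟩ := h
  apply Vt.ext
  · rw [lvl_par]; omega
  · intro i hi
    rw [lvl_par, hl] at hi
    rw [co_par, if_pos (by omega)]
    exact (hpre i (by omega)).symm

def Act (v : Vt t L b) : Prop := b (lvl v) ≤ co v (lvl v)

variable (t L b) in
def Pt : Type := {p : Vt t L b // Act p}

instance : Finite (Pt t L b) := by unfold Pt; infer_instance

noncomputable instance : Fintype (Pt t L b) := Fintype.ofFinite _

def fb (ht : 0 < t) (v : Vt t L b) : Option (Pt t L b) :=
  if h : lvl v = 0 then none else some ⟨par ht v, by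
    unfold Act
    rw [lvl_par, co_par, if_pos (by omega)]
    exact co_act v _ (by omega)⟩

lemma fb_eq_none (ht : 0 < t) (v : Vt t L b) : fb ht v = none ↔ lvl v = 0 := by
  unfold fb
  split
  · simpa
  · simpa

lemma fb_eq_some (ht : 0 < t) {v : Vt t L b} {p : Pt t L b} (h : fb ht v = some p) :
    lvl v = lvl p.1 + 1 ∧ ∀ i ≤ lvl p.1, co v i = co p.1 i := by
  unfold fb at h
  split at h
  · exact absurd h (by simp)
  · rename_i h0
    have hpar : par ht v = p.1 := congrArg (·.1) (Option.some_injective _ h)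
    have hl : lvl p.1 = lvl v - 1 := by rw [← hpar, lvl_par]
    constructor
    · omega
    · intro i hi
      rw [← hpar, co_par, if_pos (by omega)]

lemma act_lvl_lt (ht : 0 < t) (hbL : b L = t) (p : Pt t L b) : lvl p.1 < L := by
  have h1 := p.2
  unfold Act at h1
  have h2 := co_lt ht p.1 (lvl p.1)
  have h3 := lvl_le p.1
  by_contra h
  have : lvl p.1 = L := by omega
  rw [this] at h1 h2
  rw [hbL] at h1
  omega

def chd (ht : 0 < t) (p : Pt t L b) (hL : lvl p.1 < L) (c : ℕ) (hc : c < t) : Vt t L b :=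
  mk t L b (lvl p.1 + 1) (by omega)
    (fun i => if i ≤ lvl p.1 then co p.1 i else if i = lvl p.1 + 1 then c else 0)
    (fun i => by
      split
      · exact co_lt ht p.1 i
      · split
        · exact hc
        · exact ht)
    (fun i hi => by rw [if_neg (by omega), if_neg (by omega)])
    (fun i hi => by
      rw [if_pos (by omega)]
      rcases Nat.lt_or_ge i (lvl p.1) with h | h
      · exact co_act p.1 i h
      · have : i = lvl p.1 := by omega
        rw [this]
        exact p.2)

@[simp] lemma lvl_chd (ht : 0 < t) (p : Pt t L b) (hL c hc) :
    lvl (chd ht p hL c hc) = lvl p.1 + 1 := rfl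

lemma co_chd (ht : 0 < t) (p : Pt t L b) (hL c hc) (i : ℕ) :
    co (chd ht p hL c hc) i = if i ≤ lvl p.1 then co p.1 i else if i = lvl p.1 + 1 then c else 0 :=
  co_mk i

lemma fb_chd (ht : 0 < t) (p : Pt t L b) (hL c hc) : fb ht (chd ht p hL c hc) = some p := by
  unfold fb
  rw [dif_neg (by simp)]
  congr 1
  apply Subtype.ext
  apply Vt.ext
  · rw [lvl_par, lvl_chd]
    omega
  · intro i hi
    rw [lvl_par, lvl_chd] at hi
    rw [co_par, lvl_chd, if_pos (by omega), co_chd, if_pos (by omega)]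



def base (ht : 0 < t) (c : ℕ) (hc : c < t) : Vt t L b :=
  mk t L b 0 (Nat.zero_le L) (fun i => if i = 0 then c else 0)
    (fun i => by split; exacts [hc, ht])
    (fun i hi => by rw [if_neg (by omega)])
    (fun i hi => by omega)

@[simp] lemma lvl_base (ht : 0 < t) (c hc) : lvl (base (L := L) (b := b) ht c hc) = 0 := rfl

lemma co_base (ht : 0 < t) (c hc) (i : ℕ) :
    co (base (L := L) (b := b) ht c hc) i = if i = 0 then c else 0 := co_mk i

lemma fiber_ge (ht : 0 < t) (hbL : b L = t) (i : Option (Pt t L b)) :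
    t ≤ (fb ht ⁻¹' {i}).ncard := by
  obtain (rfl | ⟨p, rfl⟩) : i = none ∨ ∃ p, i = some p := by
    cases i
    · exact Or.inl rfl
    · exact Or.inr ⟨_, rfl⟩
  · -- none
    set g : Fin t → Vt t L b := fun c => base ht c.1 c.2 with hg
    have hginj : Function.Injective g := by
      intro c c' hcc
      have := congrArg (fun v => co v 0) hcc
      simp only [hg, co_base] at this
      exact Fin.ext (by simpa using this)
    have hrange : Set.range g ⊆ fb ht ⁻¹' {none} := by
      rintro _ ⟨c, rfl⟩
      simp only [Set.mem_preimage, Set.mem_singleton_iff]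
      rw [fb_eq_none]
      rfl
    calc t = (Set.range g).ncard := by
              rw [← Set.image_univ, Set.ncard_image_of_injective _ hginj, Set.ncard_univ,
                Nat.card_eq_fintype_card, Fintype.card_fin]
    _ ≤ _ := Set.ncard_le_ncard hrange (Set.toFinite _)
  · -- some p
    set g : Fin t → Vt t L b := fun c => chd ht p (act_lvl_lt ht hbL p) c.1 c.2 with hg
    have hginj : Function.Injective g := by
      intro c c' hcc
      have hco : co (g c) (lvl p.1 + 1) = co (g c') (lvl p.1 + 1) := by rw [hcc]
      rw [hg] at hco
      dsimp only at hco
      simp only [co_chd] at hco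
      apply Fin.ext
      split_ifs at hco <;> omega
    have hrange : Set.range g ⊆ fb ht ⁻¹' {some p} := by
      rintro _ ⟨c, rfl⟩
      simp only [Set.mem_preimage, Set.mem_singleton_iff]
      exact fb_chd ht p _ c.1 c.2
    calc t = (Set.range g).ncard := by
              rw [← Set.image_univ, Set.ncard_image_of_injective _ hginj, Set.ncard_univ,
                Nat.card_eq_fintype_card, Fintype.card_fin]
    _ ≤ _ := Set.ncard_le_ncard hrange (Set.toFinite _)

def dnm (ht : 0 < t) (w : Vt t L b) : Sym2 (Vt t L b) := s(par ht w, w)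

lemma rel_dnm (ht : 0 < t) {v w : Vt t L b} (h : Rel v w) : s(v, w) = dnm ht w := by
  unfold dnm
  rw [rel_par ht h]

lemma edge_bound_none (ht : 0 < t) :
    {e ∈ (Gr t L b).edgeSet | ∃ v w, e = s(v, w) ∧ fb ht v = none ∧ fb ht w ≠ none}.ncard
      ≤ t * b 1 := by
  classical
  set W : Set (Vt t L b) := {w | lvl w = 1 ∧ co w 1 < b 1} with hW
  have hsub : {e ∈ (Gr t L b).edgeSet |
      ∃ v w, e = s(v, w) ∧ fb ht v = none ∧ fb ht w ≠ none} ⊆ dnm ht '' W := by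
    rintro e ⟨hE, v, w, rfl, hfv, hfw⟩
    rw [SimpleGraph.mem_edgeSet] at hE
    have hlv : lvl v = 0 := (fb_eq_none ht v).1 hfv
    rcases hE with hR | hR
    · refine ⟨w, ⟨?_, ?_⟩, (rel_dnm ht hR).symm⟩
      · rw [hR.1, hlv]
      · have := hR.2.2
        rwa [hR.1, hlv] at this
    · exact absurd hR.1 (by omega)
  calc _ ≤ (dnm ht '' W).ncard := Set.ncard_le_ncard hsub (Set.toFinite _)
  _ ≤ W.ncard := Set.ncard_image_le (Set.toFinite _)
  _ ≤ (Finset.range t ×ˢ Finset.range (b 1)).card := by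
        apply ncard_le_card_of_inj W _ (fun w => (co w 0, co w 1))
        · rintro w ⟨hw1, hw2⟩
          rw [Finset.mem_product, Finset.mem_range, Finset.mem_range]
          exact ⟨co_lt ht w 0, hw2⟩
        · rintro w ⟨hw1, hw2⟩ w' ⟨hw1', hw2'⟩ heq
          rw [Prod.mk.injEq] at heq
          apply Vt.ext (by omega)
          intro i hi
          rw [hw1] at hi
          interval_cases i
          · exact heq.1
          · exact heq.2
  _ = t * b 1 := by rw [Finset.card_product, Finset.card_range, Finset.card_range]

lemma edge_bound_some (ht : 0 < t) (p : Pt t L b) :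
    {e ∈ (Gr t L b).edgeSet |
        ∃ v w, e = s(v, w) ∧ fb ht v = some p ∧ fb ht w ≠ some p}.ncard
      ≤ b (lvl p.1 + 1) + (t - b (lvl p.1 + 1)) * b (lvl p.1 + 2) := by
  classical
  set j := lvl p.1 with hj
  set W : Set (Vt t L b) := {w | fb ht w = some p ∧ co w (lvl w) < b (lvl w)} with hW
  set W' : Set (Vt t L b) :=
    {w | (∃ q : Pt t L b, fb ht w = some q ∧ fb ht q.1 = some p) ∧
      co w (lvl w) < b (lvl w)} with hW'
  have hsub : {e ∈ (Gr t L b).edgeSet |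
      ∃ v w, e = s(v, w) ∧ fb ht v = some p ∧ fb ht w ≠ some p} ⊆ dnm ht '' (W ∪ W') := by
    rintro e ⟨hE, v, w, rfl, hfv, hfw⟩
    rw [SimpleGraph.mem_edgeSet] at hE
    rcases hE with hR | hR
    · -- w is a child of v
      obtain ⟨hl, hpre, hjoin⟩ := hR
      have hact : Act v := by
        unfold Act
        rw [hpre (lvl v) le_rfl]
        exact co_act w (lvl v) (by omega)
      have hfbw : fb ht w = some ⟨v, hact⟩ := by
        unfold fb
        rw [dif_neg (by omega)]
        exact congrArg some (Subtype.ext (rel_par ht ⟨hl, hpre, hjoin⟩))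
      exact ⟨w, Or.inr ⟨⟨⟨v, hact⟩, hfbw, hfv⟩, hjoin⟩, (rel_dnm ht ⟨hl, hpre, hjoin⟩).symm⟩
    · -- v is a child of w
      refine ⟨v, Or.inl ⟨hfv, hR.2.2⟩, ?_⟩
      rw [Sym2.eq_swap]
      exact (rel_dnm ht hR).symm
  have hWcard : W.ncard ≤ b (j + 1) := by
    have h1 : ∀ w ∈ W, lvl w = j + 1 := by
      rintro w ⟨hw1, -⟩
      exact (fb_eq_some ht hw1).1
    calc W.ncard ≤ (Finset.range (b (j+1))).card := by
          apply ncard_le_card_of_inj W _ (fun w => co w (j+1))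
          · rintro w hw
            rw [Finset.mem_range]
            have := hw.2
            rwa [h1 w hw] at this
          · intro w hw w' hw' heq
            apply Vt.ext (by rw [h1 w hw, h1 w' hw'])
            intro i hi
            rw [h1 w hw] at hi
            rcases Nat.lt_or_ge i (j+1) with h | h
            · rw [(fb_eq_some ht hw.1).2 i (by omega), (fb_eq_some ht hw'.1).2 i (by omega)]
            · have : i = j + 1 := by omega
              rw [this]
              exact heq
    _ = b (j+1) := Finset.card_range _
  have hW'card : W'.ncard ≤ (t - b (j + 1)) * b (j + 2) := by
    have key : ∀ w ∈ W', lvl w = j + 2 ∧ b (j+1) ≤ co w (j+1) ∧ co w (j+1) < t ∧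
        co w (j+2) < b (j+2) ∧ ∀ i ≤ j, co w i = co p.1 i := by
      rintro w ⟨⟨q, hq1, hq2⟩, hw2⟩
      obtain ⟨hl1, hpre1⟩ := fb_eq_some ht hq1
      obtain ⟨hl2, hpre2⟩ := fb_eq_some ht hq2
      have hlw : lvl w = j + 2 := by omega
      have hact := q.2
      unfold Act at hact
      refine ⟨hlw, ?_, co_lt ht w _, ?_, ?_⟩
      · rw [hpre1 (j+1) (by omega), ← hl2]
        rwa [hl2] at hact ⊢
      · rwa [hlw] at hw2
      · intro i hi
        rw [hpre1 i (by omega), hpre2 i hi]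
    calc W'.ncard ≤ ((Finset.range (t - b (j+1))) ×ˢ Finset.range (b (j+2))).card := by
          apply ncard_le_card_of_inj W' _ (fun w => (co w (j+1) - b (j+1), co w (j+2)))
          · intro w hw
            obtain ⟨h1, h2, h3, h4, h5⟩ := key w hw
            rw [Finset.mem_product, Finset.mem_range, Finset.mem_range]
            exact ⟨by omega, h4⟩
          · intro w hw w' hw' heq
            obtain ⟨h1, h2, h3, h4, h5⟩ := key w hw
            obtain ⟨h1', h2', h3', h4', h5'⟩ := key w' hw'
            rw [Prod.mk.injEq] at heq
            apply Vt.ext (by omega)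
            intro i hi
            rw [h1] at hi
            rcases Nat.lt_or_ge i (j+1) with h | h
            · rw [h5 i (by omega), h5' i (by omega)]
            · rcases Nat.lt_or_ge i (j+2) with h' | h'
              · have hij : i = j + 1 := by omega
                rw [hij]
                omega
              · have hij : i = j + 2 := by omega
                rw [hij]
                exact heq.2
    _ = _ := by rw [Finset.card_product, Finset.card_range, Finset.card_range]
  calc _ ≤ (dnm ht '' (W ∪ W')).ncard := Set.ncard_le_ncard hsub (Set.toFinite _)
  _ ≤ (W ∪ W').ncard := Set.ncard_image_le (Set.toFinite _)
  _ ≤ W.ncard + W'.ncard := Set.ncard_union_le _ _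
  _ ≤ _ := Nat.add_le_add hWcard hW'card

lemma no_IT (ht : 0 < t) (hb0 : b 0 = 0) (hbL : b L = t) :
    ¬∃ T : Option (Pt t L b) → Vt t L b,
      (∀ i, fb ht (T i) = i) ∧ ∀ i j, ¬(Gr t L b).Adj (T i) (T j) := by
  rintro ⟨T, hT, hI⟩
  have main : ∀ k, k ≤ L → ∃ v, (∃ i, T i = v) ∧ lvl v = k ∧ Act v := by
    intro k
    induction k with
    | zero =>
      intro _
      refine ⟨T none, ⟨none, rfl⟩, ?_, ?_⟩
      · exact (fb_eq_none ht _).1 (hT none)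
      · unfold Act
        rw [(fb_eq_none ht _).1 (hT none), hb0]
        omega
    | succ k ih =>
      intro hk
      obtain ⟨v, ⟨i, hvi⟩, hlv, hact⟩ := ih (by omega)
      obtain ⟨hlw, hpre⟩ := fb_eq_some ht (hT (some ⟨v, hact⟩))
      have hlw' : lvl (T (some ⟨v, hact⟩)) = lvl v + 1 := hlw
      have hpre' : ∀ i' ≤ lvl v, co (T (some ⟨v, hact⟩)) i' = co v i' := hpre
      refine ⟨T (some ⟨v, hact⟩), ⟨some ⟨v, hact⟩, rfl⟩, by omega, ?_⟩
      by_contra hna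
      unfold Act at hna
      push_neg at hna
      have hrel : Rel v (T (some ⟨v, hact⟩)) := by
        refine ⟨hlw', ?_, hna⟩
        intro i' hi'
        exact (hpre' i' hi').symm
      exact hI i (some ⟨v, hact⟩) (by rw [hvi]; exact Or.inl hrel)
  obtain ⟨v, -, hlv, hact⟩ := main L le_rfl
  unfold Act at hact
  rw [hlv, hbL] at hact
  have := co_lt ht v L
  omega

lemma gr_acyclic (ht : 0 < t) : (Gr t L b).IsAcyclic := by
  apply acyclic_of_parent (Gr t L b) lvl (par ht)
  intro v w h
  rcases h with hR | hR
  · exact Or.inl ⟨hR.1, rel_par ht hR⟩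
  · exact Or.inr ⟨hR.1, rel_par ht hR⟩


end Constr

end Stmt0

open Stmt0

set_option maxHeartbeats 2000000

/-- For every `ε > 0` there is `t₀` such that for all `t ≥ t₀` there is a forest `F`
with a vertex partition (given by the fibers of `f : V → ι`) that is `t`-thick,
has block degree at most `(1/4 + ε) * t * |B|` for every block `B`, and admits
no independent transversal. -/
theorem stmt_0 (ε : ℝ) (hε : 0 < ε) :
    ∃ t₀ : ℕ, ∀ t : ℕ, t₀ ≤ t →
      ∃ (V ι : Type) (_ : Fintype V) (_ : Fintype ι) (F : SimpleGraph V) (f : V → ι),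
        F.IsAcyclic ∧
        (∀ i : ι, t ≤ (f ⁻¹' {i}).ncard) ∧
        (∀ i : ι,
          ({e ∈ F.edgeSet | ∃ v w, e = s(v, w) ∧ f v = i ∧ f w ≠ i}.ncard : ℝ) ≤
            (1 / 4 + ε) * t * ((f ⁻¹' {i}).ncard : ℝ)) ∧
        ¬∃ T : ι → V, (∀ i, f (T i) = i) ∧ ∀ i j, ¬F.Adj (T i) (T j) := by
  obtain ⟨K, hK⟩ := yseq_eventually_one (ε/2) (by linarith)
  refine ⟨max 1 ⌈4/ε⌉₊, fun t htt => ?_⟩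
  have ht : 0 < t := le_trans (le_max_left _ _) htt
  have htR : (0:ℝ) < t := by exact_mod_cast ht
  have ht4 : (4:ℝ) ≤ ε * t := by
    have h1 : ⌈4/ε⌉₊ ≤ t := le_trans (le_max_right _ _) htt
    have h2 : (4/ε : ℝ) ≤ t := le_trans (Nat.le_ceil _) (by exact_mod_cast h1)
    calc (4:ℝ) = ε * (4/ε) := by field_simp
    _ ≤ ε * t := mul_le_mul_of_nonneg_left h2 hε.le
  set L := K + 1 with hLdef
  set b : ℕ → ℕ := fun j => if j = 0 then 0 else ⌈yseq (ε/2) (j-1) * t⌉₊ with hbdef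
  have hb0 : b 0 = 0 := rfl
  have hbL : b L = t := by
    rw [hbdef]
    simp only [hLdef]
    rw [if_neg (by omega)]
    have : K + 1 - 1 = K := by omega
    rw [this, hK, one_mul, Nat.ceil_natCast]
  have hbsucc : ∀ j : ℕ, b (j+1) = ⌈yseq (ε/2) j * t⌉₊ := by
    intro j
    rw [hbdef]
    simp only [if_neg (Nat.succ_ne_zero j), Nat.add_sub_cancel]
  have hble : ∀ j : ℕ, b (j+1) ≤ t := by
    intro j
    rw [hbsucc j, Nat.ceil_le]
    have := yseq_mem (ε/2) (by linarith) j
    nlinarith [this.1, this.2]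
  refine ⟨Vt t L b, Option (Pt t L b), inferInstance, inferInstance, Gr t L b, fb ht,
    gr_acyclic ht, fun i => fiber_ge ht hbL i, ?_, no_IT ht hb0 hbL⟩
  intro i
  have hfib : (t:ℝ) ≤ ((fb ht ⁻¹' {i}).ncard : ℝ) := by exact_mod_cast fiber_ge ht hbL i
  have hpos : (0:ℝ) ≤ (1/4 + ε) * t := by positivity
  have step2 : (1/4 + ε) * t * t ≤ (1/4 + ε) * t * ((fb ht ⁻¹' {i}).ncard : ℝ) :=
    mul_le_mul_of_nonneg_left hfib hpos
  have key : ({e ∈ (Gr t L b).edgeSet |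
      ∃ v w, e = s(v, w) ∧ fb ht v = i ∧ fb ht w ≠ i}.ncard : ℝ) ≤ (1/4 + ε) * t * t := by
    cases i with
    | none =>
      have h1 := edge_bound_none (t := t) (L := L) (b := b) ht
      have h2 : ((t * b 1 : ℕ) : ℝ) ≤ (1/4 + ε) * t * t := by
        rw [Nat.cast_mul]
        have hb1 : (b 1 : ℝ) ≤ 1/4 * t + 1 := by
          rw [hbsucc 0]
          have h0 : yseq (ε/2) 0 = 1/4 := rfl
          rw [h0]
          have := Nat.ceil_lt_add_one (a := (1/4 * t : ℝ)) (by positivity)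
          linarith
        nlinarith
      exact le_trans (by exact_mod_cast h1) h2
    | some p =>
      have h1 := edge_bound_some (t := t) (L := L) (b := b) ht p
      set j := lvl p.1 with hjdef
      set yj := yseq (ε/2) j with hyj
      set yj1 := yseq (ε/2) (j+1) with hyj1
      have hmj := yseq_mem (ε/2) (by linarith) j
      have hmj1 := yseq_mem (ε/2) (by linarith) (j+1)
      have hkey := yseq_key (ε/2) (by linarith) j
      have hble1 : b (j+1) ≤ t := hble j
      have n1 : (b (j+1) : ℝ) ≤ t := by exact_mod_cast hble1
      have nle : yj * t ≤ (b (j+1) : ℝ) := by rw [hbsucc j]; exact Nat.le_ceil _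
      have n2 : ((t - b (j+1) : ℕ) : ℝ) ≤ (1 - yj) * t := by
        rw [Nat.cast_sub hble1]
        nlinarith
      have n2' : (0:ℝ) ≤ ((t - b (j+1) : ℕ) : ℝ) := Nat.cast_nonneg _
      have n3 : (b (j+2) : ℝ) ≤ yj1 * t + 1 := by
        rw [hbsucc (j+1)]
        have := Nat.ceil_lt_add_one (a := (yj1 * t : ℝ)) (by nlinarith [hmj1.1])
        linarith
      have n4 : (0:ℝ) ≤ (1 - yj) * t := by nlinarith [hmj.2]
      have e1 : ((t - b (j+1) : ℕ) : ℝ) * (b (j+2) : ℝ) ≤ ((1 - yj) * t) * (yj1 * t + 1) :=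
        mul_le_mul n2 n3 (Nat.cast_nonneg _) n4
      have e3 : ((1 - yj) * yj1) * (t*t) ≤ (1/4 + ε/2) * (t*t) :=
        mul_le_mul_of_nonneg_right hkey (by positivity)
      have hcast : ((b (j+1) + (t - b (j+1)) * b (j+2) : ℕ) : ℝ)
          = (b (j+1) : ℝ) + ((t - b (j+1) : ℕ) : ℝ) * (b (j+2) : ℝ) := by
        push_cast
        ring
      have h2 : ((b (j+1) + (t - b (j+1)) * b (j+2) : ℕ) : ℝ) ≤ (1/4 + ε) * t * t := by
        rw [hcast]
        nlinarith [hmj.1, hmj.2, hmj1.1, hmj1.2]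
      exact le_trans (by exact_mod_cast h1) h2
  exact le_trans key step2
end

section
/- Fix an integer r ≥ 2 and a real ε > 0. There exists a constant C = C(ε, r) such that for all sufficiently large integers t and every integer n > t^C, there exist an r-uniform hypergraph G and a partition 𝒫 = {V₁, …, V_n} of its vertex set into n blocks such that: (i) every block V_i has size at least t; (ii) for each i ∈ {1, …, n}, the number of edges of G intersecting V_i is at most ((r−1)^{r−1}/r^r + ε)·t^r; and (iii) there is no independent transversal of 𝒫 in G. -/
namespace IT5

open Finset

/-- positional encoding of lists over `Fin t × Fin r` into `ℕ`. -/
def enc (t r : ℕ) : List (Fin t × Fin r) → ℕ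
  | [] => 0
  | c :: s => (c.1.val + t * c.2.val + 1) + (t * r + 1) * enc t r s

lemma digit_lt {t r : ℕ} (c : Fin t × Fin r) : c.1.val + t * c.2.val + 1 < t * r + 1 := by
  have h1 := c.1.isLt
  have h2 := c.2.isLt
  have : t * (c.2.val + 1) ≤ t * r := Nat.mul_le_mul_left t h2
  rw [Nat.mul_add, Nat.mul_one] at this
  omega

lemma enc_lt (t r : ℕ) : ∀ s : List (Fin t × Fin r), enc t r s < (t * r + 1) ^ s.length := by
  intro s
  induction s with
  | nil => simp [enc]
  | cons c s ih =>
    have hd := digit_lt c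
    have h2 : enc t r s + 1 ≤ (t * r + 1) ^ s.length := ih
    calc enc t r (c :: s) = (c.1.val + t * c.2.val + 1) + (t * r + 1) * enc t r s := rfl
      _ < (t * r + 1) * (enc t r s + 1) := by
          rw [Nat.mul_add, Nat.mul_one]; omega
      _ ≤ (t * r + 1) * (t * r + 1) ^ s.length := Nat.mul_le_mul_left _ h2
      _ = (t * r + 1) ^ (c :: s).length := by rw [List.length_cons, pow_succ]; ring

lemma enc_inj (t r : ℕ) : ∀ s s' : List (Fin t × Fin r), enc t r s = enc t r s' → s = s' := by
  intro s
  induction s with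
  | nil =>
    intro s' h
    cases s' with
    | nil => rfl
    | cons c s'' => simp only [enc] at h; omega
  | cons c s ih =>
    intro s' h
    cases s' with
    | nil => simp only [enc] at h; omega
    | cons c' s'' =>
      simp only [enc] at h
      have hd := digit_lt c
      have hd' := digit_lt c'
      have hmod : (c.1.val + t * c.2.val + 1) = (c'.1.val + t * c'.2.val + 1) := by
        have := congrArg (· % (t * r + 1)) h
        simpa [Nat.add_mul_mod_self_left, Nat.mod_eq_of_lt hd, Nat.mod_eq_of_lt hd'] using this
      have htail : enc t r s = enc t r s'' := by
        have h2 : (t * r + 1) * enc t r s = (t * r + 1) * enc t r s'' := by omega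
        exact Nat.eq_of_mul_eq_mul_left (Nat.succ_pos _) h2
      have hc : c = c' := by
        have h11 := c.1.isLt
        have h12 := c'.1.isLt
        have hv2 : c.2.val = c'.2.val := by
          rcases Nat.lt_trichotomy c.2.val c'.2.val with hlt | heq | hgt
          · have : t * (c.2.val + 1) ≤ t * c'.2.val := Nat.mul_le_mul_left t hlt
            rw [Nat.mul_add, Nat.mul_one] at this; omega
          · exact heq
          · have : t * (c'.2.val + 1) ≤ t * c.2.val := Nat.mul_le_mul_left t hgt
            rw [Nat.mul_add, Nat.mul_one] at this; omega
        have hv1 : c.1.val = c'.1.val := by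
          rw [hv2] at hmod; omega
        exact Prod.ext (Fin.ext hv1) (Fin.ext hv2)
      rw [hc, ih _ htail]

variable (r t n d L : ℕ)

def aa (m : ℕ) : ℕ := t - m * d

def blk (hn : 0 < n) (s : List (Fin t × Fin r)) : Fin n :=
  ⟨enc t r s % n, Nat.mod_lt _ hn⟩

def child (s : List (Fin t × Fin r)) (u : Fin t) (i : Fin (r - 1)) :
    List (Fin t × Fin r) :=
  (u, ⟨i.val, by have := i.isLt; omega⟩) :: s

abbrev Par := List (Fin t × Fin r) × Fin t × (Fin (r - 1) → Fin t)

def valid (p : Par r t) : Prop :=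
  p.2.1.val < aa t d p.1.length ∧ ∀ i, aa t d (p.1.length + 1) ≤ (p.2.2 i).val

def edg (hn : 0 < n) (p : Par r t) : Finset (Fin n × Fin t) :=
  insert (blk r t n hn p.1, p.2.1)
    (Finset.univ.image fun i : Fin (r - 1) =>
      (blk r t n hn (child r t p.1 p.2.1 i), p.2.2 i))

def ES (hn : 0 < n) : Set (Finset (Fin n × Fin t)) :=
  edg r t n hn '' {p | valid r t d p}

variable {r t n d L}

lemma blk_inj (hn : 0 < n) (hBn : (t * r + 1) ^ L ≤ n) {s s' : List (Fin t × Fin r)}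
    (hs : s.length ≤ L) (hs' : s'.length ≤ L)
    (h : blk r t n hn s = blk r t n hn s') : s = s' := by
  have hlt : ∀ u : List (Fin t × Fin r), u.length ≤ L → enc t r u < n := fun u hu =>
    lt_of_lt_of_le (lt_of_lt_of_le (enc_lt t r u)
      (Nat.pow_le_pow_right (Nat.succ_le_succ (Nat.zero_le _)) hu)) hBn
  have h1 : enc t r s % n = enc t r s' % n := congrArg Fin.val h
  rw [Nat.mod_eq_of_lt (hlt s hs), Nat.mod_eq_of_lt (hlt s' hs')] at h1
  exact enc_inj t r s s' h1

lemma valid_len (hLd : t < L * d) {p : Par r t} (hp : valid r t d p) :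
    p.1.length < L := by
  have h1 : p.1.length * d < t := by
    have := hp.1
    unfold aa at this
    omega
  by_contra hcon
  push_neg at hcon
  have : L * d ≤ p.1.length * d := Nat.mul_le_mul_right d hcon
  omega

lemma edg_card (hr : 2 ≤ r) (hn : 0 < n) (hBn : (t * r + 1) ^ L ≤ n) (hLd : t < L * d)
    {p : Par r t} (hp : valid r t d p) : (edg r t n hn p).card = r := by
  obtain ⟨s, u, w⟩ := p
  have hm : s.length < L := valid_len hLd hp
  have hchl : ∀ i : Fin (r - 1), (child r t s u i).length ≤ L := fun i => by
    simp [child, List.length_cons]; omega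
  have hginj : Function.Injective fun i : Fin (r - 1) =>
      ((blk r t n hn (child r t s u i), w i) : Fin n × Fin t) := by
    intro i j hij
    have h1 : blk r t n hn (child r t s u i) = blk r t n hn (child r t s u j) :=
      congrArg Prod.fst hij
    have h2 := blk_inj hn hBn (hchl i) (hchl j) h1
    unfold child at h2
    simp only [List.cons.injEq, Prod.mk.injEq, Fin.mk.injEq] at h2
    exact Fin.ext h2.1.2
  have hnm : (blk r t n hn s, u) ∉
      Finset.univ.image fun i : Fin (r - 1) =>
        ((blk r t n hn (child r t s u i), w i) : Fin n × Fin t) := by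
    intro hmem
    rw [Finset.mem_image] at hmem
    obtain ⟨i, -, hi⟩ := hmem
    have h1 : blk r t n hn (child r t s u i) = blk r t n hn s := congrArg Prod.fst hi
    have h2 := blk_inj hn hBn (hchl i) (le_of_lt hm) h1
    have : (child r t s u i).length = s.length := congrArg List.length h2
    simp [child] at this
  rw [show edg r t n hn (s,u,w) = insert (blk r t n hn s, u) (Finset.univ.image fun i : Fin (r - 1) => ((blk r t n hn (child r t s u i), w i) : Fin n × Fin t)) from rfl, Finset.card_insert_of_notMem hnm, Finset.card_image_of_injective _ hginj,
    Finset.card_univ, Fintype.card_fin]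
  omega


lemma card_filter_lt (t a : ℕ) (h : a ≤ t) :
    (Finset.univ.filter fun u : Fin t => u.val < a).card = a := by
  have he : (Finset.univ.filter fun u : Fin t => u.val < a)
      = Finset.univ.image (Fin.castLE h) := by
    ext x
    simp only [Finset.mem_filter, Finset.mem_univ, true_and, Finset.mem_image]
    constructor
    · intro hx; exact ⟨⟨x.val, hx⟩, rfl⟩
    · rintro ⟨y, rfl⟩; exact y.isLt
  rw [he, Finset.card_image_of_injective _ (Fin.castLE_injective h),
    Finset.card_univ, Fintype.card_fin]

lemma card_filter_le (t a : ℕ) :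
    (Finset.univ.filter fun x : Fin t => a ≤ x.val).card = t - a := by
  rcases le_or_gt a t with h | h
  · have h2 : (Finset.univ.filter fun x : Fin t => a ≤ x.val)
        = Finset.univ.filter fun x : Fin t => ¬ (x.val < a) := by
      simp [not_lt]
    rw [h2, Finset.filter_not, Finset.card_sdiff_of_subset (Finset.filter_subset _ _),
      card_filter_lt t a h, Finset.card_univ, Fintype.card_fin]
  · have h2 : (Finset.univ.filter fun x : Fin t => a ≤ x.val) = ∅ := by
      apply Finset.filter_eq_empty_iff.mpr
      intro x _
      have := x.isLt
      omega
    rw [h2]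
    simp
    omega

variable {r t n d L : ℕ}

lemma no_IT (hn : 0 < n) (hLd : t < L * d) :
    ¬∃ T : Fin n → Fin n × Fin t, (∀ i, (T i).1 = i) ∧
      ∀ e ∈ ES r t n d hn, ¬(↑e : Set (Fin n × Fin t)) ⊆ Set.range T := by
  rintro ⟨T, hT1, hT2⟩
  have descent : ∀ m, ∃ s : List (Fin t × Fin r), s.length = m ∧
      ((T (blk r t n hn s)).2 : ℕ) < aa t d m := by
    intro m
    induction m with
    | zero => exact ⟨[], rfl, by simpa [aa] using (T (blk r t n hn [])).2.isLt⟩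
    | succ m ih =>
      obtain ⟨s, hlen, hu⟩ := ih
      set u := (T (blk r t n hn s)).2 with hudef
      by_cases h : ∃ i : Fin (r - 1),
          ((T (blk r t n hn (child r t s u i))).2 : ℕ) < aa t d (m + 1)
      · obtain ⟨i, hi⟩ := h
        exact ⟨child r t s u i, by simp [child, hlen], hi⟩
      · push_neg at h
        set p : Par r t := (s, u, fun i => (T (blk r t n hn (child r t s u i))).2) with hp
        have hval : valid r t d p := by
          constructor
          · show u.val < aa t d s.length
            rw [hlen]; exact hu
          · intro i
            show aa t d (s.length + 1) ≤ _
            rw [hlen]; exact h i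
        have hmem : edg r t n hn p ∈ ES r t n d hn := ⟨p, hval, rfl⟩
        have hsub : (↑(edg r t n hn p) : Set (Fin n × Fin t)) ⊆ Set.range T := by
          intro v hv
          rw [Finset.mem_coe] at hv
          rcases Finset.mem_insert.mp hv with h1 | h1
          · exact ⟨blk r t n hn s, (Prod.ext (hT1 _) rfl).trans h1.symm⟩
          · obtain ⟨i, -, hi⟩ := Finset.mem_image.mp h1
            exact ⟨blk r t n hn (child r t s u i), (Prod.ext (hT1 _) rfl).trans hi⟩
        exact (hT2 _ hmem hsub).elim
  obtain ⟨s, hlen, hlt⟩ := descent L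
  have hz : aa t d L = 0 := by unfold aa; omega
  omega

lemma count_bound (hr : 2 ≤ r) (hn : 0 < n) (hBn : (t * r + 1) ^ L ≤ n)
    (hLd : t < L * d) (i₀ : Fin n) :
    ∃ m : ℕ, {e ∈ ES r t n d hn | ∃ v ∈ e, v.1 = i₀}.ncard ≤
      (t - m * d) * (t - (t - (m + 1) * d)) ^ (r - 1) + t ^ (r - 1) := by
  classical
  set PA : Set (Par r t) := {p | valid r t d p ∧ blk r t n hn p.1 = i₀} with hPAdef
  set PB : Set (Par r t) :=
    {p | valid r t d p ∧ ∃ i, blk r t n hn (child r t p.1 p.2.1 i) = i₀} with hPBdef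
  have hAinj : Set.InjOn (fun p : Par r t => p.2) PA := by
    rintro p hp q hq hpq
    have h1 : p.1 = q.1 := blk_inj hn hBn (le_of_lt (valid_len hLd hp.1))
      (le_of_lt (valid_len hLd hq.1)) (hp.2.trans hq.2.symm)
    exact Prod.ext h1 hpq
  have hBinj : Set.InjOn (fun p : Par r t => p.2.2) PB := by
    rintro p ⟨hpv, i, hpi⟩ q ⟨hqv, j, hqj⟩ hpq
    have hlp : (child r t p.1 p.2.1 i).length ≤ L := by
      have := valid_len hLd hpv; simp [child]; omega
    have hlq : (child r t q.1 q.2.1 j).length ≤ L := by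
      have := valid_len hLd hqv; simp [child]; omega
    have h1 := blk_inj hn hBn hlp hlq (hpi.trans hqj.symm)
    unfold child at h1
    simp only [List.cons.injEq, Prod.mk.injEq] at h1
    exact Prod.ext h1.2 (Prod.ext h1.1.1 hpq)
  have hAfin : PA.Finite := Set.Finite.of_finite_image (Set.toFinite _) hAinj
  have hBfin : PB.Finite := Set.Finite.of_finite_image (Set.toFinite _) hBinj
  have hsub : {e ∈ ES r t n d hn | ∃ v ∈ e, v.1 = i₀}
      ⊆ edg r t n hn '' (PA ∪ PB) := by
    rintro e ⟨⟨p, hpv, rfl⟩, v, hv, hvi⟩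
    refine ⟨p, ?_, rfl⟩
    rcases Finset.mem_insert.mp hv with h1 | h1
    · left; exact ⟨hpv, by rw [← hvi, h1]⟩
    · right
      obtain ⟨i, -, hi⟩ := Finset.mem_image.mp h1
      exact ⟨hpv, i, by rw [← hvi, ← hi]⟩
  have hBcard : PB.ncard ≤ t ^ (r - 1) := by
    calc PB.ncard = ((fun p : Par r t => p.2.2) '' PB).ncard :=
          (Set.ncard_image_of_injOn hBinj).symm
      _ ≤ (Set.univ : Set (Fin (r - 1) → Fin t)).ncard :=
          Set.ncard_le_ncard (Set.subset_univ _) (Set.toFinite _)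
      _ = t ^ (r - 1) := by
          rw [Set.ncard_univ, Nat.card_eq_fintype_card, Fintype.card_pi_const,
            Fintype.card_fin]
  have hmain : {e ∈ ES r t n d hn | ∃ v ∈ e, v.1 = i₀}.ncard
      ≤ PA.ncard + PB.ncard := by
    calc {e ∈ ES r t n d hn | ∃ v ∈ e, v.1 = i₀}.ncard
        ≤ (edg r t n hn '' (PA ∪ PB)).ncard :=
          Set.ncard_le_ncard hsub ((hAfin.union hBfin).image _)
      _ ≤ (PA ∪ PB).ncard := Set.ncard_image_le (hAfin.union hBfin)
      _ ≤ PA.ncard + PB.ncard := Set.ncard_union_le _ _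
  by_cases hPA : PA = ∅
  · refine ⟨0, ?_⟩
    have : PA.ncard = 0 := by rw [hPA]; simp
    calc {e ∈ ES r t n d hn | ∃ v ∈ e, v.1 = i₀}.ncard
        ≤ PA.ncard + PB.ncard := hmain
      _ ≤ 0 + t ^ (r - 1) := by rw [this]; exact Nat.add_le_add_left hBcard 0
      _ ≤ _ := by omega
  · obtain ⟨p₀, hp₀⟩ := Set.nonempty_iff_ne_empty.mpr hPA
    refine ⟨p₀.1.length, ?_⟩
    set m := p₀.1.length with hmdef
    set FT : Finset (Fin t × (Fin (r - 1) → Fin t)) :=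
      (Finset.univ.filter fun u : Fin t => u.val < aa t d m) ×ˢ
        Fintype.piFinset (fun _ : Fin (r - 1) =>
          Finset.univ.filter fun x : Fin t => aa t d (m + 1) ≤ x.val) with hFTdef
    have himg : (fun p : Par r t => p.2) '' PA ⊆ ↑FT := by
      rintro q ⟨p, hp, rfl⟩
      have hsame : p.1 = p₀.1 := blk_inj hn hBn (le_of_lt (valid_len hLd hp.1))
        (le_of_lt (valid_len hLd hp₀.1)) (hp.2.trans hp₀.2.symm)
      rw [Finset.mem_coe, hFTdef, Finset.mem_product]
      constructor
      · simp only [Finset.mem_filter, Finset.mem_univ, true_and]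
        have := hp.1.1
        rw [hsame] at this
        exact this
      · rw [Fintype.mem_piFinset]
        intro i
        simp only [Finset.mem_filter, Finset.mem_univ, true_and]
        have := hp.1.2 i
        rw [hsame] at this
        exact this
    have hPAcard : PA.ncard ≤ (t - m * d) * (t - (t - (m + 1) * d)) ^ (r - 1) := by
      have h1 : PA.ncard = ((fun p : Par r t => p.2) '' PA).ncard :=
        (Set.ncard_image_of_injOn hAinj).symm
      have h2 : ((fun p : Par r t => p.2) '' PA).ncard ≤ FT.card := by
        rw [← Set.ncard_coe_finset]
        exact Set.ncard_le_ncard himg FT.finite_toSet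
      have h3 : FT.card = (t - m * d) * (t - (t - (m + 1) * d)) ^ (r - 1) := by
        rw [hFTdef, Finset.card_product, Fintype.card_piFinset_const,
          card_filter_lt t (aa t d m) (by unfold aa; omega), card_filter_le]
        rfl
      omega
    calc {e ∈ ES r t n d hn | ∃ v ∈ e, v.1 = i₀}.ncard
        ≤ PA.ncard + PB.ncard := hmain
      _ ≤ _ := Nat.add_le_add hPAcard hBcard


lemma pow_incr (x d M : ℝ) (hx : 0 ≤ x) (hd : 0 ≤ d) (hM : x + d ≤ M) :
    ∀ R : ℕ, (x + d) ^ (R + 1) ≤ x ^ (R + 1) + (R + 1) * d * M ^ R := by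
  have hM0 : 0 ≤ M := le_trans (by linarith) hM
  intro R
  induction R with
  | zero => simp
  | succ R ih =>
    have hxM : x ≤ M := by linarith
    have h2 : (x + d) ^ (R + 1) * (x + d) ≤ (x ^ (R + 1) + (R + 1) * d * M ^ R) * (x + d) :=
      mul_le_mul_of_nonneg_right ih (by linarith)
    have h3 : x ^ (R + 1) ≤ M ^ (R + 1) := pow_le_pow_left₀ hx hxM _
    have h7 : M ^ R * (x + d) ≤ M ^ (R + 1) := by
      calc M ^ R * (x + d) ≤ M ^ R * M :=
            mul_le_mul_of_nonneg_left hM (pow_nonneg hM0 R)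
        _ = M ^ (R + 1) := by ring
    have h6 : x ^ (R + 1) * d ≤ M ^ (R + 1) * d := mul_le_mul_of_nonneg_right h3 hd
    have h8 : ((R:ℝ) + 1) * d * (M ^ R * (x + d)) ≤ ((R:ℝ) + 1) * d * M ^ (R + 1) := by
      apply mul_le_mul_of_nonneg_left h7
      positivity
    calc (x + d) ^ (R + 1 + 1) = (x + d) ^ (R + 1) * (x + d) := by ring
      _ ≤ (x ^ (R + 1) + (R + 1) * d * M ^ R) * (x + d) := h2
      _ = x ^ (R + 2) + x ^ (R + 1) * d + ((R:ℝ) + 1) * d * (M ^ R * (x + d)) := by ring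
      _ ≤ x ^ (R + 2) + M ^ (R + 1) * d + ((R:ℝ) + 1) * d * M ^ (R + 1) := by linarith
      _ ≤ x ^ (R + 1 + 1) + (↑(R + 1) + 1) * d * M ^ (R + 1) := by push_cast; ring_nf; linarith
  -- done

lemma amgm (r : ℕ) (hr : 2 ≤ r) (x T : ℝ) (hx : 0 ≤ x) (hxt : x ≤ T) :
    (T - x) * x ^ (r - 1) ≤ ((r : ℝ) - 1) ^ (r - 1) / (r : ℝ) ^ r * T ^ r := by
  have hr2 : (2:ℝ) ≤ (r:ℝ) := by exact_mod_cast hr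
  have hr0 : (0:ℝ) < (r:ℝ) := by linarith
  have hR0 : (0:ℝ) < (r:ℝ) - 1 := by linarith
  set p₁ : ℝ := (r:ℝ) * x / ((r:ℝ) - 1) with hp₁
  set p₂ : ℝ := (r:ℝ) * (T - x) with hp₂
  set w₁ : ℝ := ((r:ℝ) - 1) / (r:ℝ) with hw₁
  set w₂ : ℝ := 1 / (r:ℝ) with hw₂
  have hp₁0 : 0 ≤ p₁ := by positivity
  have hp₂0 : 0 ≤ p₂ := by
    have : 0 ≤ T - x := by linarith
    positivity
  have key := Real.geom_mean_le_arith_mean2_weighted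
    (by positivity : (0:ℝ) ≤ w₁) (by positivity : (0:ℝ) ≤ w₂) hp₁0 hp₂0
    (by rw [hw₁, hw₂]; field_simp; ring)
  have hsum : w₁ * p₁ + w₂ * p₂ = T := by
    rw [hw₁, hw₂, hp₁, hp₂]; field_simp; ring
  rw [hsum] at key
  have hnn : 0 ≤ p₁ ^ w₁ * p₂ ^ w₂ :=
    mul_nonneg (Real.rpow_nonneg hp₁0 _) (Real.rpow_nonneg hp₂0 _)
  have key2 : (p₁ ^ w₁ * p₂ ^ w₂) ^ (r:ℕ) ≤ T ^ (r:ℕ) := pow_le_pow_left₀ hnn key r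
  have hexp : (p₁ ^ w₁ * p₂ ^ w₂) ^ (r:ℕ) = p₁ ^ (r - 1 : ℕ) * p₂ := by
    rw [← Real.rpow_natCast (p₁ ^ w₁ * p₂ ^ w₂) r,
      Real.mul_rpow (Real.rpow_nonneg hp₁0 _) (Real.rpow_nonneg hp₂0 _),
      ← Real.rpow_mul hp₁0, ← Real.rpow_mul hp₂0]
    have e1 : w₁ * (r:ℝ) = ((r - 1 : ℕ) : ℝ) := by
      rw [hw₁, Nat.cast_sub (by omega : 1 ≤ r)]
      field_simp
      norm_num
    have e2 : w₂ * (r:ℝ) = 1 := by rw [hw₂]; field_simp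
    rw [e1, e2, Real.rpow_one, Real.rpow_natCast]
  rw [hexp] at key2
  rw [div_mul_eq_mul_div, le_div_iff₀ (by positivity : (0:ℝ) < (r:ℝ) ^ r)]
  have hpow : (r:ℝ) ^ r = (r:ℝ) ^ (r - 1) * r := by
    rw [← pow_succ]
    congr 1
    omega
  have hRne : ((r:ℝ) - 1) ≠ 0 := ne_of_gt hR0
  calc (T - x) * x ^ (r - 1) * (r:ℝ) ^ r
      = (p₁ ^ (r - 1 : ℕ) * p₂) * ((r:ℝ) - 1) ^ (r - 1) := by
        rw [hpow, hp₁, hp₂, div_pow]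
        field_simp
        ring
    _ ≤ T ^ r * ((r:ℝ) - 1) ^ (r - 1) :=
        mul_le_mul_of_nonneg_right key2 (by positivity)
    _ = ((r:ℝ) - 1) ^ (r - 1) * T ^ r := mul_comm _ _



lemma real_bound (r : ℕ) (hr : 2 ≤ r) (ε : ℝ) (t d : ℕ) (ht : 0 < t) (hdt : d ≤ t)
    (hkey : ((r : ℝ) - 1) * 2 ^ (r - 2) * (d : ℝ) + 1 ≤ ε * t) (m : ℕ) :
    (((t - m * d) * (t - (t - (m + 1) * d)) ^ (r - 1) + t ^ (r - 1) : ℕ) : ℝ)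
      ≤ (((r : ℝ) - 1) ^ (r - 1) / (r : ℝ) ^ r + ε) * (t : ℝ) ^ r := by
  have hr2 : (2:ℝ) ≤ (r:ℝ) := by exact_mod_cast hr
  have ht0 : (0:ℝ) < (t:ℝ) := by exact_mod_cast ht
  have hd0 : (0:ℝ) ≤ (d:ℝ) := Nat.cast_nonneg d
  have hdt' : (d:ℝ) ≤ (t:ℝ) := by exact_mod_cast hdt
  have hK0 : (0:ℝ) ≤ ((r : ℝ) - 1) ^ (r - 1) / (r : ℝ) ^ r :=
    div_nonneg (pow_nonneg (by linarith) _) (pow_nonneg (by linarith) _)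
  have hεt : (1:ℝ) ≤ ε * t := by
    have h1 : (0:ℝ) ≤ ((r : ℝ) - 1) * 2 ^ (r - 2) * (d : ℝ) := by
      apply mul_nonneg (mul_nonneg (by linarith) (by positivity)) hd0
    linarith
  have htr : (t:ℝ) ^ r = (t:ℝ) * (t:ℝ) ^ (r - 1) := by
    rw [mul_comm, ← pow_succ]
    congr 1
    omega
  have htr2 : (t:ℝ) ^ (r - 1) = (t:ℝ) ^ (r - 2) * (t:ℝ) := by
    rw [← pow_succ]
    congr 1
    omega
  have hpowpos : (0:ℝ) ≤ (t:ℝ) ^ (r - 1) := by positivity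
  rcases le_or_gt (m * d) t with hmd | hmd
  · -- main case
    set B : ℕ := t - (t - (m + 1) * d) with hBdef
    have hcast : (((t - m * d) * B ^ (r - 1) + t ^ (r - 1) : ℕ) : ℝ)
        = ((t : ℝ) - (m * d : ℕ)) * (B:ℝ) ^ (r - 1) + (t:ℝ) ^ (r - 1) := by
      rw [Nat.cast_add, Nat.cast_mul, Nat.cast_sub hmd, Nat.cast_pow, Nat.cast_pow]
    rw [hcast]
    set x : ℝ := ((m * d : ℕ) : ℝ) with hxdef
    have hx0 : (0:ℝ) ≤ x := Nat.cast_nonneg _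
    have hxt : x ≤ (t:ℝ) := by rw [hxdef]; exact Nat.cast_le.mpr hmd
    have htx0 : (0:ℝ) ≤ (t:ℝ) - x := by linarith
    have hB0 : (0:ℝ) ≤ (B:ℝ) := Nat.cast_nonneg _
    have hBle : (B:ℝ) ≤ x + (d:ℝ) := by
      have h1 : B ≤ (m + 1) * d := by omega
      have h2 : ((m + 1) * d : ℕ) = m * d + d := by ring
      have : (B:ℝ) ≤ (((m + 1) * d : ℕ) : ℝ) := by exact_mod_cast h1
      rw [h2] at this
      have hxsplit : x = (m:ℝ) * (d:ℝ) := by rw [hxdef]; push_cast; ring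
      push_cast at this
      rw [hxsplit]
      linarith
    have hidx : r - 2 + 1 = r - 1 := by omega
    have hup : (x + (d:ℝ)) ^ (r - 1) ≤ x ^ (r - 1)
        + (((r:ℝ) - 1) * (d:ℝ)) * (2 * (t:ℝ)) ^ (r - 2) := by
      have h := pow_incr x (d:ℝ) (2 * (t:ℝ)) hx0 hd0 (by linarith) (r - 2)
      rw [hidx] at h
      have hco : ((r - 2 : ℕ) : ℝ) + 1 = (r:ℝ) - 1 := by
        rw [Nat.cast_sub (by omega : 2 ≤ r)]
        ring
      calc (x + (d:ℝ)) ^ (r - 1) ≤ x ^ (r - 1) + ((r - 2 : ℕ) + 1) * (d:ℝ) * (2 * (t:ℝ)) ^ (r - 2) := h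
        _ = x ^ (r - 1) + (((r:ℝ) - 1) * (d:ℝ)) * (2 * (t:ℝ)) ^ (r - 2) := by rw [hco]
    have F1 : ((t:ℝ) - x) * (B:ℝ) ^ (r - 1) ≤ ((t:ℝ) - x) * (x + (d:ℝ)) ^ (r - 1) :=
      mul_le_mul_of_nonneg_left (pow_le_pow_left₀ hB0 hBle _) htx0
    have F2 : ((t:ℝ) - x) * (x + (d:ℝ)) ^ (r - 1)
        ≤ ((t:ℝ) - x) * x ^ (r - 1)
          + ((t:ℝ) - x) * ((((r:ℝ) - 1) * (d:ℝ)) * (2 * (t:ℝ)) ^ (r - 2)) := by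
      have := mul_le_mul_of_nonneg_left hup htx0
      calc ((t:ℝ) - x) * (x + (d:ℝ)) ^ (r - 1)
          ≤ ((t:ℝ) - x) * (x ^ (r - 1) + (((r:ℝ) - 1) * (d:ℝ)) * (2 * (t:ℝ)) ^ (r - 2)) := this
        _ = _ := by ring
    have F3 : ((t:ℝ) - x) * x ^ (r - 1)
        ≤ ((r : ℝ) - 1) ^ (r - 1) / (r : ℝ) ^ r * (t:ℝ) ^ r := amgm r hr x (t:ℝ) hx0 hxt
    have F4 : ((t:ℝ) - x) * ((((r:ℝ) - 1) * (d:ℝ)) * (2 * (t:ℝ)) ^ (r - 2))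
        ≤ (((r:ℝ) - 1) * 2 ^ (r - 2) * (d:ℝ)) * (t:ℝ) ^ (r - 1) := by
      rw [mul_pow, htr2]
      have h1 : ((t:ℝ) - x) * (t:ℝ) ^ (r - 2) ≤ (t:ℝ) * (t:ℝ) ^ (r - 2) :=
        mul_le_mul_of_nonneg_right (by linarith) (by positivity)
      have h2 : (0:ℝ) ≤ ((r:ℝ) - 1) * (d:ℝ) * 2 ^ (r - 2) :=
        mul_nonneg (mul_nonneg (by linarith) hd0) (by positivity)
      nlinarith [h1, h2]
    have F5 : ((((r:ℝ) - 1) * 2 ^ (r - 2) * (d:ℝ)) + 1) * (t:ℝ) ^ (r - 1)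
        ≤ ε * (t:ℝ) ^ r := by
      rw [htr]
      calc ((((r:ℝ) - 1) * 2 ^ (r - 2) * (d:ℝ)) + 1) * (t:ℝ) ^ (r - 1)
          ≤ (ε * (t:ℝ)) * (t:ℝ) ^ (r - 1) := mul_le_mul_of_nonneg_right hkey hpowpos
        _ = ε * ((t:ℝ) * (t:ℝ) ^ (r - 1)) := by ring
    linarith [F1, F2, F3, F4, F5]
  · -- degenerate case : t < m * d
    have hA0 : t - m * d = 0 := by omega
    rw [hA0]
    simp only [Nat.zero_mul, Nat.zero_add, Nat.cast_pow]
    have h1 : ((t:ℝ)) ^ (r - 1) ≤ ε * (t:ℝ) ^ r := by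
      rw [htr]
      calc (t:ℝ) ^ (r - 1) = 1 * (t:ℝ) ^ (r - 1) := by ring
        _ ≤ (ε * (t:ℝ)) * (t:ℝ) ^ (r - 1) := mul_le_mul_of_nonneg_right hεt hpowpos
        _ = ε * ((t:ℝ) * (t:ℝ) ^ (r - 1)) := by ring
    have h2 : (0:ℝ) ≤ ((r : ℝ) - 1) ^ (r - 1) / (r : ℝ) ^ r * (t:ℝ) ^ r :=
      mul_nonneg hK0 (by positivity)
    nlinarith [h1, h2]


end IT5

open IT5 in
/-- For every `r ≥ 2` and `ε > 0` there is a constant `C` such that for all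
sufficiently large `t` and every `n > t ^ C`, there is an `r`-uniform hypergraph
(vertex set `V`, edge set `E`) with a `t`-thick partition into `n` blocks (fibers of
`f : V → Fin n`) such that at most `((r-1)^(r-1)/r^r + ε) t^r` edges meet each block,
and there is no independent transversal. -/
theorem stmt_5 (r : ℕ) (hr : 2 ≤ r) (ε : ℝ) (hε : 0 < ε) :
    ∃ C : ℝ, ∃ t₀ : ℕ, ∀ t : ℕ, t₀ ≤ t → ∀ n : ℕ, (t : ℝ) ^ C < (n : ℝ) →
      ∃ (V : Type) (_ : Fintype V) (E : Set (Finset V)) (f : V → Fin n),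
        (∀ e ∈ E, e.card = r) ∧
        (∀ i : Fin n, t ≤ (f ⁻¹' {i}).ncard) ∧
        (∀ i : Fin n,
          ({e ∈ E | ∃ v ∈ e, f v = i}.ncard : ℝ) ≤
            (((r : ℝ) - 1) ^ (r - 1) / (r : ℝ) ^ r + ε) * (t : ℝ) ^ r) ∧
        ¬∃ T : Fin n → V, (∀ i, f (T i) = i) ∧ ∀ e ∈ E, ¬(e : Set V) ⊆ Set.range T := by
  set N : ℕ := r * 2 ^ r + 1 with hNdef
  set L : ℕ := ⌈(4 * N : ℝ) / ε⌉₊ + 2 with hLdef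
  refine ⟨((3 * L : ℕ) : ℝ), ⌈(4 * N : ℝ) / ε⌉₊ + r + 4, ?_⟩
  intro t ht n hn
  set d : ℕ := t / L + 1 with hddef
  -- basic numeric facts
  have ht2 : 2 ≤ t := by omega
  have hrt : r ≤ t := by omega
  have ht0 : 0 < t := by omega
  have hL2 : 2 ≤ L := by omega
  have ht0R : (0:ℝ) < (t:ℝ) := by exact_mod_cast ht0
  have ht1R : (1:ℝ) ≤ (t:ℝ) := by exact_mod_cast ht0
  have hr2R : (2:ℝ) ≤ (r:ℝ) := by exact_mod_cast hr
  -- n is large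
  rw [Real.rpow_natCast] at hn
  have hnn : (t : ℕ) ^ (3 * L) < n := by exact_mod_cast hn
  have hn0 : 0 < n := by
    have : 0 < t ^ (3 * L) := Nat.pow_pos ht0
    omega
  have h3 : t * r + 1 ≤ t ^ 3 := by
    have f1 : t * r ≤ t * t := Nat.mul_le_mul_left t hrt
    have f2 : 2 * (t * t) ≤ t * (t * t) := Nat.mul_le_mul_right (t * t) ht2
    have f3 : 1 ≤ t * t := Nat.one_le_iff_ne_zero.mpr (by positivity)
    have e : t ^ 3 = t * (t * t) := by ring
    omega
  have hBn : (t * r + 1) ^ L ≤ n := by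
    have h4 : (t * r + 1) ^ L ≤ t ^ (3 * L) := by
      rw [mul_comm 3 L, pow_mul, ← pow_mul, mul_comm L 3, pow_mul]
      exact Nat.pow_le_pow_left h3 L
    omega
  -- depth / step facts
  have hLd : t < L * d := by
    have h1 := Nat.div_add_mod t L
    have h2 : t % L < L := Nat.mod_lt t (by omega)
    have h5 : L * d = L * (t / L) + L := Nat.mul_succ L (t / L)
    omega
  have hdt : d ≤ t := by
    have h1 : t / L ≤ t / 2 := Nat.div_le_div_left hL2 (by omega)
    have h2 : t / 2 + 1 ≤ t := by omega
    omega
  -- the key epsilon inequality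
  have hkey : ((r : ℝ) - 1) * 2 ^ (r - 2) * (d : ℝ) + 1 ≤ ε * t := by
    set c : ℝ := ((r : ℝ) - 1) * 2 ^ (r - 2) with hcdef
    have hc0 : (0:ℝ) ≤ c := mul_nonneg (by linarith) (by positivity)
    have hcN : c ≤ (N:ℝ) := by
      have h1 : ((r:ℝ) - 1) ≤ (r:ℝ) := by linarith
      have h2 : (2:ℝ) ^ (r - 2) ≤ 2 ^ r :=
        pow_le_pow_right₀ one_le_two (by omega)
      have h3 : c ≤ (r:ℝ) * 2 ^ r := by
        apply mul_le_mul h1 h2 (by positivity) (by linarith)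
      have h4 : ((N:ℕ):ℝ) = (r:ℝ) * 2 ^ r + 1 := by
        rw [hNdef]; push_cast; ring
      linarith
    have hLceil : (4 * (N:ℝ)) / ε ≤ (L:ℝ) := by
      have h1 := Nat.le_ceil ((4 * (N:ℝ)) / ε)
      have h2 : ((⌈(4 * (N:ℝ)) / ε⌉₊ : ℕ) : ℝ) ≤ (L:ℝ) := by
        rw [hLdef]; push_cast; linarith
      linarith
    have htceil : (4 * (N:ℝ)) / ε ≤ (t:ℝ) := by
      have h1 := Nat.le_ceil ((4 * (N:ℝ)) / ε)
      have h2 : ((⌈(4 * (N:ℝ)) / ε⌉₊ : ℕ) : ℝ) ≤ (t:ℝ) := by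
        have : ⌈(4 * (N:ℝ)) / ε⌉₊ ≤ t := by omega
        exact_mod_cast this
      linarith
    have hεL : 4 * (N:ℝ) ≤ ε * L := by
      rw [div_le_iff₀ hε] at hLceil; linarith
    have hεt : 4 * (N:ℝ) ≤ ε * t := by
      rw [div_le_iff₀ hε] at htceil; linarith
    have hL0R : (0:ℝ) < (L:ℝ) := by
      have : (0:ℕ) < L := by omega
      exact_mod_cast this
    have hq : (t:ℝ) / L * L = (t:ℝ) := div_mul_cancel₀ _ (ne_of_gt hL0R)
    have hq0 : (0:ℝ) ≤ (t:ℝ) / L := by positivity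
    have hdR : (d:ℝ) ≤ (t:ℝ) / L + 1 := by
      have h1 : ((t / L : ℕ) : ℝ) ≤ (t:ℝ) / (L:ℝ) := Nat.cast_div_le
      have h2 : (d:ℝ) = ((t / L : ℕ) : ℝ) + 1 := by
        rw [hddef, Nat.cast_add, Nat.cast_one]
      linarith
    have h4cq : 4 * (c * ((t:ℝ) / L)) ≤ ε * t := by
      nlinarith [mul_nonneg (show (0:ℝ) ≤ ε * L - 4 * c by linarith) hq0, hq]
    have hcd : c * (d:ℝ) ≤ c * ((t:ℝ) / L + 1) := mul_le_mul_of_nonneg_left hdR hc0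
    have hN1 : (1:ℝ) ≤ (N:ℝ) := by
      have : (1:ℕ) ≤ N := by omega
      exact_mod_cast this
    linarith
  -- the construction
  refine ⟨Fin n × Fin t, inferInstance, ES r t n d hn0, Prod.fst, ?_, ?_, ?_, ?_⟩
  · rintro e ⟨p, hp, rfl⟩
    exact edg_card hr hn0 hBn hLd hp
  · intro i
    have he : (Prod.fst ⁻¹' {i} : Set (Fin n × Fin t))
        = (fun v : Fin t => (i, v)) '' Set.univ := by
      ext ⟨a, b⟩
      simp only [Set.mem_preimage, Set.mem_singleton_iff, Set.image_univ, Set.mem_range,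
        Prod.mk.injEq]
      constructor
      · intro h; exact ⟨b, h.symm, rfl⟩
      · rintro ⟨y, h1, h2⟩; exact h1.symm
    rw [he, Set.ncard_image_of_injective _ (fun a b h => by
      simpa using congrArg Prod.snd h), Set.ncard_univ, Nat.card_eq_fintype_card,
      Fintype.card_fin]
  · intro i
    obtain ⟨m, hm⟩ := count_bound hr hn0 hBn hLd i
    calc ({e ∈ ES r t n d hn0 | ∃ v ∈ e, v.1 = i}.ncard : ℝ)
        ≤ (((t - m * d) * (t - (t - (m + 1) * d)) ^ (r - 1) + t ^ (r - 1) : ℕ) : ℝ) := by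
          exact_mod_cast hm
      _ ≤ (((r : ℝ) - 1) ^ (r - 1) / (r : ℝ) ^ r + ε) * (t : ℝ) ^ r :=
          real_bound r hr ε t d ht0 hdt hkey m
  · exact no_IT hn0 hLd
end

section
/- Let t be a positive integer, let G be a finite simple graph, and let 𝒫 be a partition of the vertex set of G in which every block has size at least t and such that for every block B ∈ 𝒫 the number of edges of G with exactly one endpoint in B is at most (t/4)·|B|. Then there exist at least (t/2)^{|𝒫|} independent transversals of 𝒫 in G, where |𝒫| is the number of blocks. -/
open Finset

attribute [local instance] Classical.propDecidable

namespace WWaux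

variable {V ι : Type*} [Fintype V] [Fintype ι]
  (G : SimpleGraph V) (f : V → ι) (g : ι → V)

def okA (s : Finset ι) (T : ι → V) : Prop :=
  (∀ i, f (T i) = i) ∧ (∀ i ∉ s, T i = g i) ∧ ∀ i ∈ s, ∀ j ∈ s, ¬ G.Adj (T i) (T j)

noncomputable def cntA (s : Finset ι) : ℕ :=
  (univ.filter (fun T : ι → V => okA G f g s T)).card

noncomputable def thrA (s : Finset ι) (k : ι) (u : V) : ℕ :=
  (univ.filter (fun T : ι → V => okA G f g s T ∧ T k = u)).card

noncomputable def degout (v : V) : ℕ :=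
  (univ.filter (fun w => G.Adj v w ∧ f w ≠ f v)).card

theorem lem_fiber {s : Finset ι} {k : ι} (hk : k ∈ s) :
    cntA G f g s = ∑ v ∈ univ.filter (fun v => f v = k), thrA G f g s k v := by
  classical
  rw [cntA, Finset.card_eq_sum_card_fiberwise (f := fun T : ι → V => T k)
    (t := univ.filter (fun v => f v = k)) (fun T hT => by
      simp only [Finset.mem_coe, mem_filter, mem_univ, true_and] at hT ⊢
      exact hT.1 k)]
  refine Finset.sum_congr rfl fun v _ => ?_
  rw [thrA, Finset.filter_filter]

theorem lem_bij (hg : ∀ i, f (g i) = i) {s : Finset ι} {k : ι} (hk : k ∈ s)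
    {v : V} (hv : f v = k) :
    thrA G f g s k v = (univ.filter (fun T : ι → V =>
      okA G f g (s.erase k) T ∧ ∀ j ∈ s.erase k, ¬ G.Adj v (T j))).card := by
  classical
  refine Finset.card_bij' (fun T _ => Function.update T k (g k))
    (fun T _ => Function.update T k v) ?_ ?_ ?_ ?_
  · rintro T hT
    simp only [mem_filter, mem_univ, true_and] at hT ⊢
    obtain ⟨⟨h1, h2, h3⟩, h4⟩ := hT
    refine ⟨⟨?_, ?_, ?_⟩, ?_⟩
    · intro i
      by_cases hik : i = k
      · subst hik; simp [hg]
      · simp [Function.update_of_ne hik, h1]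
    · intro i hi
      by_cases hik : i = k
      · subst hik; simp
      · rw [Function.update_of_ne hik]
        exact h2 i (fun his => hi (Finset.mem_erase.2 ⟨hik, his⟩))
    · intro i hi j hj
      rw [Function.update_of_ne (Finset.mem_erase.1 hi).1,
        Function.update_of_ne (Finset.mem_erase.1 hj).1]
      exact h3 i (Finset.mem_erase.1 hi).2 j (Finset.mem_erase.1 hj).2
    · intro j hj
      rw [Function.update_of_ne (Finset.mem_erase.1 hj).1]
      rw [← h4]
      exact h3 k hk j (Finset.mem_erase.1 hj).2
  · rintro T hT
    simp only [mem_filter, mem_univ, true_and] at hT ⊢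
    obtain ⟨⟨h1, h2, h3⟩, h4⟩ := hT
    refine ⟨⟨?_, ?_, ?_⟩, by simp⟩
    · intro i
      by_cases hik : i = k
      · subst hik; simp [hv]
      · simp [Function.update_of_ne hik, h1]
    · intro i hi
      have hik : i ≠ k := fun h => hi (h ▸ hk)
      rw [Function.update_of_ne hik]
      exact h2 i (fun hie => hi (Finset.mem_erase.1 hie).2)
    · intro i hi j hj
      by_cases hik : i = k
      · rw [hik, Function.update_self]
        by_cases hjk : j = k
        · rw [hjk, Function.update_self]; exact G.irrefl
        · rw [Function.update_of_ne hjk]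
          exact h4 j (Finset.mem_erase.2 ⟨hjk, hj⟩)
      · rw [Function.update_of_ne hik]
        by_cases hjk : j = k
        · rw [hjk, Function.update_self]
          intro hadj
          exact h4 i (Finset.mem_erase.2 ⟨hik, hi⟩) hadj.symm
        · rw [Function.update_of_ne hjk]
          exact h3 i (Finset.mem_erase.2 ⟨hik, hi⟩) j (Finset.mem_erase.2 ⟨hjk, hj⟩)
  · rintro T hT
    simp only [mem_filter, mem_univ, true_and] at hT
    show Function.update (Function.update T k (g k)) k v = T
    rw [Function.update_idem, ← hT.2, Function.update_eq_self]
  · rintro T hT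
    simp only [mem_filter, mem_univ, true_and] at hT
    have h : T k = g k := hT.1.2.1 k (Finset.notMem_erase k s)
    show Function.update (Function.update T k v) k (g k) = T
    rw [Function.update_idem, ← h, Function.update_eq_self]


theorem lem_le (hg : ∀ i, f (g i) = i) {s : Finset ι} {k : ι} (hk : k ∈ s)
    {v : V} (hv : f v = k)
    (hbij : thrA G f g s k v = (univ.filter (fun T : ι → V =>
      okA G f g (s.erase k) T ∧ ∀ j ∈ s.erase k, ¬ G.Adj v (T j))).card) :
    thrA G f g s k v ≤ cntA G f g (s.erase k) := by
  rw [hbij, cntA]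
  refine Finset.card_le_card fun T hT => ?_
  simp only [mem_filter, mem_univ, true_and] at hT ⊢
  exact hT.1

theorem lem_bad (hg : ∀ i, f (g i) = i) {s : Finset ι} {k : ι} (hk : k ∈ s)
    {v : V} (hv : f v = k)
    (hbij : thrA G f g s k v = (univ.filter (fun T : ι → V =>
      okA G f g (s.erase k) T ∧ ∀ j ∈ s.erase k, ¬ G.Adj v (T j))).card) :
    cntA G f g (s.erase k) ≤ thrA G f g s k v +
      ∑ w ∈ univ.filter (fun w => G.Adj v w ∧ f w ∈ s.erase k),
        thrA G f g (s.erase k) (f w) w := by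
  classical
  set s' := s.erase k
  set A := univ.filter (fun T : ι → V => okA G f g s' T) with hA
  set C := univ.filter (fun T : ι → V => okA G f g s' T ∧ ∀ j ∈ s', ¬ G.Adj v (T j)) with hC
  set wset := univ.filter (fun w => G.Adj v w ∧ f w ∈ s') with hw
  set D := wset.biUnion (fun w => univ.filter
    (fun T : ι → V => okA G f g s' T ∧ T (f w) = w)) with hD
  have hsub : A ⊆ C ∪ D := by
    intro T hT
    simp only [hA, mem_filter, mem_univ, true_and] at hT
    by_cases hav : ∀ j ∈ s', ¬ G.Adj v (T j)
    · refine Finset.mem_union_left _ ?_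
      simp only [hC, mem_filter, mem_univ, true_and]
      exact ⟨hT, hav⟩
    · push_neg at hav
      obtain ⟨j, hj, hadj⟩ := hav
      refine Finset.mem_union_right _ ?_
      rw [hD, Finset.mem_biUnion]
      refine ⟨T j, ?_, ?_⟩
      · simp only [hw, mem_filter, mem_univ, true_and]
        exact ⟨hadj, by rw [hT.1 j]; exact hj⟩
      · simp only [mem_filter, mem_univ, true_and]
        exact ⟨hT, by rw [hT.1 j]⟩
  calc cntA G f g s' = A.card := rfl
    _ ≤ (C ∪ D).card := Finset.card_le_card hsub
    _ ≤ C.card + D.card := Finset.card_union_le _ _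
    _ ≤ thrA G f g s k v + ∑ w ∈ wset, thrA G f g s' (f w) w := by
        gcongr
        · rw [hbij]
        · exact Finset.card_biUnion_le

theorem lem_wset {s : Finset ι} {k : ι} {v : V} (hv : f v = k) :
    (univ.filter (fun w => G.Adj v w ∧ f w ∈ s.erase k)).card ≤ degout G f v := by
  refine Finset.card_le_card fun w hw => ?_
  simp only [mem_filter, mem_univ, true_and] at hw ⊢
  exact ⟨hw.1, by rw [hv]; exact (Finset.mem_erase.1 hw.2).1⟩

theorem lem_deg (i : ι) :
    {e ∈ G.edgeSet | ∃ v w, e = s(v, w) ∧ f v = i ∧ f w ≠ i}.ncard =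
      ∑ v ∈ univ.filter (fun v => f v = i), degout G f v := by
  classical
  have hset : {e ∈ G.edgeSet | ∃ v w, e = s(v, w) ∧ f v = i ∧ f w ≠ i} =
      (fun p : V × V => s(p.1, p.2)) '' {p : V × V | G.Adj p.1 p.2 ∧ f p.1 = i ∧ f p.2 ≠ i} := by
    ext e
    constructor
    · rintro ⟨he, v, w, rfl, hv, hw⟩
      exact ⟨(v, w), ⟨(SimpleGraph.mem_edgeSet G).1 he, hv, hw⟩, rfl⟩
    · rintro ⟨⟨v, w⟩, ⟨hadj, hv, hw⟩, rfl⟩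
      exact ⟨(SimpleGraph.mem_edgeSet G).2 hadj, v, w, rfl, hv, hw⟩
  rw [hset, Set.ncard_image_of_injOn]
  · have hco : {p : V × V | G.Adj p.1 p.2 ∧ f p.1 = i ∧ f p.2 ≠ i} =
        ↑(univ.filter (fun p : V × V => G.Adj p.1 p.2 ∧ f p.1 = i ∧ f p.2 ≠ i)) := by
      ext p; simp
    rw [hco, Set.ncard_coe_finset]
    rw [Finset.card_eq_sum_card_fiberwise (f := Prod.fst)
      (t := univ.filter (fun v => f v = i)) (fun p hp => by
        simp only [Finset.mem_coe, mem_filter, mem_univ, true_and] at hp ⊢; exact hp.2.1)]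
    refine Finset.sum_congr rfl fun v hv => ?_
    simp only [mem_filter, mem_univ, true_and] at hv
    rw [degout]
    refine Finset.card_bij' (fun p _ => p.2) (fun w _ => (v, w)) ?_ ?_ ?_ ?_
    · rintro p hp
      simp only [mem_filter, mem_univ, true_and] at hp ⊢
      refine ⟨by rw [← hp.2]; exact hp.1.1, by rw [hv]; exact hp.1.2.2⟩
    · rintro w hw
      simp only [mem_filter, mem_univ, true_and] at hw ⊢
      exact ⟨⟨hw.1, hv, fun hc => hw.2 (hc.trans hv.symm)⟩, trivial⟩
    · rintro ⟨a, b⟩ hp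
      simp only [mem_filter, mem_univ, true_and] at hp
      have h : a = v := hp.2
      show (v, b) = (a, b)
      rw [h]
    · rintro w _; rfl
  · rintro ⟨v, w⟩ ⟨_, hv, hw⟩ ⟨v', w'⟩ ⟨_, hv', hw'⟩ heq
    simp only [Sym2.eq_iff] at heq
    rcases heq with h | h
    · exact Prod.ext h.1 h.2
    · exfalso; rw [← h.1] at hw'; exact hw' hv

theorem lem_pre (i : ι) :
    (f ⁻¹' {i}).ncard = (univ.filter (fun v => f v = i)).card := by
  have : f ⁻¹' {i} = ↑(univ.filter (fun v => f v = i)) := by ext v; simp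
  rw [this, Set.ncard_coe_finset]

theorem lem_empty (hg : ∀ i, f (g i) = i) : cntA G f g (∅ : Finset ι) = 1 := by
  rw [cntA, Finset.card_eq_one]
  refine ⟨g, ?_⟩
  ext T
  rw [Finset.mem_filter, Finset.mem_singleton]
  simp only [mem_univ, true_and, okA]
  constructor
  · rintro ⟨h1, h2, h3⟩
    exact funext fun i => h2 i (Finset.notMem_empty i)
  · rintro rfl
    exact ⟨hg, fun i _ => rfl, fun i hi => absurd hi (Finset.notMem_empty i)⟩


theorem main (t : ℕ) (ht : 1 ≤ t) (hg : ∀ i, f (g i) = i)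
    (hthick : ∀ i : ι, t ≤ (univ.filter (fun v => f v = i)).card)
    (hdeg : ∀ i : ι, ((∑ v ∈ univ.filter (fun v => f v = i), degout G f v : ℕ) : ℝ) ≤
      (t : ℝ) / 4 * ((univ.filter (fun v => f v = i)).card : ℝ)) :
    ∀ s : Finset ι, ((t : ℝ) / 2) ^ s.card ≤ (cntA G f g s : ℝ) ∧
      ∀ k ∈ s, ∀ u : V, f u = k →
        (thrA G f g s k u : ℝ) ≤ 2 / (t : ℝ) * (cntA G f g s : ℝ) := by
  intro s
  induction s using Finset.strongInduction with
  | _ s IH =>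
  have ht0 : 0 < t := ht
  have htR : (0 : ℝ) < t := by exact_mod_cast ht0
  -- the key estimate, for every k ∈ s
  have key : ∀ k ∈ s, ((t : ℝ) / 2) * (cntA G f g (s.erase k) : ℝ) ≤ (cntA G f g s : ℝ) := by
    intro k hk
    have hss : s.erase k ⊂ s := Finset.erase_ssubset hk
    obtain ⟨iha, ihb⟩ := IH (s.erase k) hss
    set c' : ℝ := (cntA G f g (s.erase k) : ℝ) with hc'
    have hc0 : (0 : ℝ) ≤ c' := Nat.cast_nonneg _
    have hq0 : (0 : ℝ) ≤ 2 / (t : ℝ) * c' := by positivity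
    -- per-vertex lower bound
    have hper : ∀ v ∈ univ.filter (fun v => f v = k),
        c' - (degout G f v : ℝ) * (2 / (t : ℝ) * c') ≤ (thrA G f g s k v : ℝ) := by
      intro v hv
      simp only [mem_filter, mem_univ, true_and] at hv
      have hbij := lem_bij G f g hg hk hv
      have h1 := lem_bad G f g hg hk hv hbij
      have h1' : c' ≤ (thrA G f g s k v : ℝ) +
          ∑ w ∈ univ.filter (fun w => G.Adj v w ∧ f w ∈ s.erase k),
            (thrA G f g (s.erase k) (f w) w : ℝ) := by
        rw [hc']
        exact_mod_cast h1
      have h2 : (∑ w ∈ univ.filter (fun w => G.Adj v w ∧ f w ∈ s.erase k),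
          (thrA G f g (s.erase k) (f w) w : ℝ)) ≤
          ((univ.filter (fun w => G.Adj v w ∧ f w ∈ s.erase k)).card : ℝ) *
            (2 / (t : ℝ) * c') := by
        calc (∑ w ∈ univ.filter (fun w => G.Adj v w ∧ f w ∈ s.erase k),
            (thrA G f g (s.erase k) (f w) w : ℝ))
            ≤ ∑ _w ∈ univ.filter (fun w => G.Adj v w ∧ f w ∈ s.erase k),
              (2 / (t : ℝ) * c') := by
              refine Finset.sum_le_sum fun w hw => ?_
              simp only [mem_filter, mem_univ, true_and] at hw
              exact ihb (f w) hw.2 w rfl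
          _ = _ := by rw [Finset.sum_const, nsmul_eq_mul]
      have h3 : ((univ.filter (fun w => G.Adj v w ∧ f w ∈ s.erase k)).card : ℝ) ≤
          (degout G f v : ℝ) := by exact_mod_cast lem_wset G f hv
      nlinarith [mul_le_mul_of_nonneg_right h3 hq0]
    -- sum over the block
    have hsum : (cntA G f g s : ℝ) =
        ∑ v ∈ univ.filter (fun v => f v = k), (thrA G f g s k v : ℝ) := by
      rw [lem_fiber G f g hk]
      push_cast
      ring
    have hlow : ∑ v ∈ univ.filter (fun v => f v = k),
        (c' - (degout G f v : ℝ) * (2 / (t : ℝ) * c')) ≤ (cntA G f g s : ℝ) := by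
      rw [hsum]
      exact Finset.sum_le_sum hper
    have hsplit : ∑ v ∈ univ.filter (fun v => f v = k),
        (c' - (degout G f v : ℝ) * (2 / (t : ℝ) * c')) =
        ((univ.filter (fun v => f v = k)).card : ℝ) * c' -
          ((∑ v ∈ univ.filter (fun v => f v = k), degout G f v : ℕ) : ℝ) *
            (2 / (t : ℝ) * c') := by
      rw [Finset.sum_sub_distrib, Finset.sum_const, nsmul_eq_mul, ← Finset.sum_mul]
      push_cast
      ring
    have hB : (t : ℝ) ≤ ((univ.filter (fun v => f v = k)).card : ℝ) := by
      exact_mod_cast hthick k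
    have hD := hdeg k
    have hDpos : (0 : ℝ) ≤ ((∑ v ∈ univ.filter (fun v => f v = k), degout G f v : ℕ) : ℝ) :=
      Nat.cast_nonneg _
    have hhalf : (t : ℝ) / 4 * ((univ.filter (fun v => f v = k)).card : ℝ) *
        (2 / (t : ℝ) * c') = ((univ.filter (fun v => f v = k)).card : ℝ) * c' / 2 := by
      field_simp
      ring
    nlinarith [mul_le_mul_of_nonneg_right hD hq0, hsplit, hlow,
      mul_le_mul_of_nonneg_right hB hc0]
  constructor
  · -- the exponential lower bound
    rcases s.eq_empty_or_nonempty with rfl | ⟨k, hk⟩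
    · rw [lem_empty G f g hg]
      simp
    · obtain ⟨iha, -⟩ := IH (s.erase k) (Finset.erase_ssubset hk)
      have hcard : (s.erase k).card + 1 = s.card := Finset.card_erase_add_one hk
      rw [← hcard, pow_succ]
      calc ((t : ℝ) / 2) ^ (s.erase k).card * ((t : ℝ) / 2)
          ≤ (cntA G f g (s.erase k) : ℝ) * ((t : ℝ) / 2) := by
            refine mul_le_mul_of_nonneg_right iha (by positivity)
        _ ≤ (cntA G f g s : ℝ) := by rw [mul_comm]; exact key k hk
  · -- the through-vertex upper bound
    intro k hk u hu
    have hbij := lem_bij G f g hg hk hu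
    have hle : (thrA G f g s k u : ℝ) ≤ (cntA G f g (s.erase k) : ℝ) := by
      exact_mod_cast lem_le G f g hg hk hu hbij
    have hkey := key k hk
    have hrw : (cntA G f g (s.erase k) : ℝ) =
        2 / (t : ℝ) * (((t : ℝ) / 2) * (cntA G f g (s.erase k) : ℝ)) := by
      field_simp
    calc (thrA G f g s k u : ℝ) ≤ (cntA G f g (s.erase k) : ℝ) := hle
      _ = 2 / (t : ℝ) * (((t : ℝ) / 2) * (cntA G f g (s.erase k) : ℝ)) := hrw
      _ ≤ 2 / (t : ℝ) * (cntA G f g s : ℝ) := by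
          refine mul_le_mul_of_nonneg_left hkey (by positivity)


end WWaux

open Finset in
/-- Wanless–Wood for graphs: if the partition (fibers of `f`) is `t`-thick and each
block `B` meets at most `(t/4)·|B|` edges with exactly one endpoint in `B`, then there
are at least `(t/2) ^ (number of blocks)` independent transversals. -/
theorem stmt_8 {V ι : Type*} [Fintype V] [Fintype ι] (t : ℕ) (ht : 1 ≤ t)
    (G : SimpleGraph V) (f : V → ι)
    (hthick : ∀ i : ι, t ≤ (f ⁻¹' {i}).ncard)
    (hdeg : ∀ i : ι,
      ({e ∈ G.edgeSet | ∃ v w, e = s(v, w) ∧ f v = i ∧ f w ≠ i}.ncard : ℝ) ≤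
        (t : ℝ) / 4 * ((f ⁻¹' {i}).ncard : ℝ)) :
    ((t : ℝ) / 2) ^ (Fintype.card ι) ≤
      ({T : ι → V | (∀ i, f (T i) = i) ∧ ∀ i j, ¬G.Adj (T i) (T j)}.ncard : ℝ) := by
  classical
  have hne : ∀ i : ι, ∃ v, f v = i := by
    intro i
    have h1 : 1 ≤ (f ⁻¹' {i}).ncard := le_trans ht (hthick i)
    have h2 : (f ⁻¹' {i}).Nonempty := Set.nonempty_of_ncard_ne_zero (by omega)
    exact h2
  choose g hg using hne
  have hthick' : ∀ i : ι, t ≤ (univ.filter (fun v => f v = i)).card := by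
    intro i
    have := hthick i
    rwa [WWaux.lem_pre f i] at this
  have hdeg' : ∀ i : ι, ((∑ v ∈ univ.filter (fun v => f v = i), WWaux.degout G f v : ℕ) : ℝ) ≤
      (t : ℝ) / 4 * ((univ.filter (fun v => f v = i)).card : ℝ) := by
    intro i
    have := hdeg i
    rwa [WWaux.lem_deg G f i, WWaux.lem_pre f i] at this
  obtain ⟨ha, -⟩ := WWaux.main G f g t ht hg hthick' hdeg' univ
  have hseteq : {T : ι → V | (∀ i, f (T i) = i) ∧ ∀ i j, ¬G.Adj (T i) (T j)} =
      ↑(univ.filter (fun T : ι → V => WWaux.okA G f g univ T)) := by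
    ext T
    simp only [Set.mem_setOf_eq, Finset.coe_filter, mem_univ, true_and, WWaux.okA]
    constructor
    · rintro ⟨h1, h2⟩
      exact ⟨h1, fun i hi => absurd trivial hi, fun i _ j _ => h2 i j⟩
    · rintro ⟨h1, _, h3⟩
      exact ⟨h1, fun i j => h3 i trivial j trivial⟩
  rw [hseteq, Set.ncard_coe_finset, ← Finset.card_univ (α := ι)]
  exact ha
end

section
/- Fix integers r ≥ 2 and t ≥ 1. Let G be an r-uniform hypergraph and let 𝒫 = {V₁, …, V_n} be a partition of its vertex set in which every block has size at least t. Suppose that for each i ∈ {1, …, n}, at most ((r−1)^{r−1}/r^r)·t^{r−1}·|V_i| stretched edges of G intersect V_i. Then there exist at least ((r−1)/r)^n · t^n independent transversals of 𝒫 in G. -/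
open Finset
set_option linter.unusedSectionVars false

section WW

variable {V ι : Type*} [Fintype V] [Fintype ι] [DecidableEq V] [DecidableEq ι]

private noncomputable def wwPhi (E : Set (Finset V)) (f : V → ι) (v₀ : V) (S : Finset ι) :
    Finset (ι → V) :=
  @Finset.filter _ (fun g => (∀ i ∈ S, f (g i) = i) ∧ (∀ i ∉ S, g i = v₀) ∧
    ∀ e ∈ E, ¬ ((e : Set V) ⊆ g '' ↑S)) (Classical.decPred _) Finset.univ

private lemma mem_wwPhi {E : Set (Finset V)} {f : V → ι} {v₀ : V} {S : Finset ι} {g : ι → V} :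
    g ∈ wwPhi E f v₀ S ↔ (∀ i ∈ S, f (g i) = i) ∧ (∀ i ∉ S, g i = v₀) ∧
      ∀ e ∈ E, ¬ ((e : Set V) ⊆ g '' ↑S) := by
  rw [wwPhi]
  rw [@Finset.mem_filter _ _ (Classical.decPred _)]
  simp

private lemma wwPhi_empty {E : Set (Finset V)} {f : V → ι} {v₀ : V}
    (hE : ∀ e ∈ E, e ≠ ∅) : (wwPhi E f v₀ (∅ : Finset ι)).card = 1 := by
  have : wwPhi E f v₀ (∅ : Finset ι) = {fun _ => v₀} := by
    ext g
    rw [mem_wwPhi, Finset.mem_singleton]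
    constructor
    · rintro ⟨-, h2, -⟩
      funext i
      exact h2 i (by simp)
    · rintro rfl
      refine ⟨by simp, fun i _ => rfl, fun e he hsub => ?_⟩
      obtain ⟨x, hx⟩ := Finset.nonempty_iff_ne_empty.2 (hE e he)
      have := hsub hx
      simp at this
  rw [this, Finset.card_singleton]

private noncomputable def wwVj (f : V → ι) (j : ι) : Finset V :=
  @Finset.filter _ (fun v => f v = j) (Classical.decPred _) Finset.univ

private lemma mem_wwVj {f : V → ι} {j : ι} {v : V} : v ∈ wwVj f j ↔ f v = j := by
  rw [wwVj, @Finset.mem_filter _ _ (Classical.decPred _)]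
  simp

private noncomputable def wwPair (E : Set (Finset V)) (f : V → ι) (v₀ : V)
    (S : Finset ι) (j : ι) : Finset ((ι → V) × V) :=
  wwPhi E f v₀ S ×ˢ wwVj f j

private lemma mem_wwPair {E : Set (Finset V)} {f : V → ι} {v₀ : V} {S : Finset ι} {j : ι}
    {p : (ι → V) × V} : p ∈ wwPair E f v₀ S j ↔ p.1 ∈ wwPhi E f v₀ S ∧ f p.2 = j := by
  rw [wwPair, Finset.mem_product, mem_wwVj]

private noncomputable def wwGood (E : Set (Finset V)) (f : V → ι) (v₀ : V)
    (S : Finset ι) (j : ι) : Finset ((ι → V) × V) :=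
  @Finset.filter _ (fun p => ∀ e ∈ E, ¬ ((e : Set V) ⊆ insert p.2 (p.1 '' ↑S)))
    (Classical.decPred _) (wwPair E f v₀ S j)

private noncomputable def wwBadE (E : Set (Finset V)) (f : V → ι) (v₀ : V)
    (S : Finset ι) (j : ι) (e : Finset V) : Finset ((ι → V) × V) :=
  @Finset.filter _ (fun p => (e : Set V) ⊆ insert p.2 (p.1 '' ↑S))
    (Classical.decPred _) (wwPair E f v₀ S j)

private lemma mem_wwBadE {E : Set (Finset V)} {f : V → ι} {v₀ : V} {S : Finset ι} {j : ι}
    {e : Finset V} {p : (ι → V) × V} :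
    p ∈ wwBadE E f v₀ S j e ↔ p ∈ wwPair E f v₀ S j ∧ (e : Set V) ⊆ insert p.2 (p.1 '' ↑S) := by
  rw [wwBadE, @Finset.mem_filter _ _ (Classical.decPred _)]

/-- Structure of an edge contained in a partial transversal extended by one vertex. -/
private lemma ww_edge_props {E : Set (Finset V)} {f : V → ι} {v₀ : V} {S : Finset ι} {j : ι}
    (hj : j ∉ S) {g : ι → V} {v : V} {e : Finset V}
    (hg : g ∈ wwPhi E f v₀ S) (hv : f v = j) (he : e ∈ E)
    (hsub : (e : Set V) ⊆ insert v (g '' ↑S)) :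
    (∀ a ∈ e, ∀ b ∈ e, a ≠ b → f a ≠ f b) ∧ v ∈ e ∧
      (∀ u ∈ e, u ≠ v → f u ∈ S ∧ g (f u) = u) := by
  rw [mem_wwPhi] at hg
  obtain ⟨hg1, hg2, hg3⟩ := hg
  have key : ∀ u ∈ e, u ≠ v → f u ∈ S ∧ g (f u) = u := by
    intro u hu huv
    have := hsub (by exact_mod_cast hu)
    rw [Set.mem_insert_iff] at this
    rcases this with h | h
    · exact absurd h huv
    · obtain ⟨i, hiS, rfl⟩ := h
      have hfi : f (g i) = i := hg1 i (by exact_mod_cast hiS)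
      rw [hfi]
      exact ⟨by exact_mod_cast hiS, rfl⟩
  have hve : v ∈ e := by
    by_contra hvne
    refine hg3 e he (fun u hu => ?_)
    obtain ⟨hfu, hgu⟩ := key u (by exact_mod_cast hu) (fun h => hvne (h ▸ hu))
    exact ⟨f u, by exact_mod_cast hfu, hgu⟩
  refine ⟨?_, hve, key⟩
  intro a ha b hb hab hfab
  by_cases hav : a = v
  · have hbv : b ≠ v := fun h => hab (hav.trans h.symm)
    have h1 := (key b hb hbv).1
    rw [← hfab, hav, hv] at h1
    exact hj h1
  · by_cases hbv : b = v
    · have h1 := (key a ha hav).1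
      rw [hfab, hbv, hv] at h1
      exact hj h1
    · obtain ⟨hfa, hga⟩ := key a ha hav
      obtain ⟨hfb, hgb⟩ := key b hb hbv
      exact hab (by rw [← hga, ← hgb, hfab])

private lemma ww_good_card {E : Set (Finset V)} {f : V → ι} {v₀ : V} {S : Finset ι} {j : ι}
    (hj : j ∉ S) :
    (wwGood E f v₀ S j).card ≤ (wwPhi E f v₀ (insert j S)).card := by
  classical
  apply Finset.card_le_card_of_injOn (fun p => Function.update p.1 j p.2)
  · intro p hp
    rw [Finset.mem_coe, wwGood, @Finset.mem_filter _ _ (Classical.decPred _), mem_wwPair] at hp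
    obtain ⟨⟨hg, hv⟩, hgood⟩ := hp
    simp only [Finset.mem_coe]
    rw [mem_wwPhi] at hg ⊢
    obtain ⟨hg1, hg2, hg3⟩ := hg
    have himg : (Function.update p.1 j p.2) '' ↑(insert j S) = insert p.2 (p.1 '' ↑S) := by
      rw [Finset.coe_insert, Set.image_insert_eq, Function.update_self]
      congr 1
      apply Set.image_congr
      intro i hiS
      exact Function.update_of_ne (fun h => hj (by rw [← h]; exact_mod_cast hiS)) _ _
    refine ⟨?_, ?_, ?_⟩
    · intro i hi
      rcases Finset.mem_insert.1 hi with rfl | hiS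
      · rw [Function.update_self]; exact hv
      · rw [Function.update_of_ne (fun h => hj (by rw [← h]; exact hiS))]
        exact hg1 i hiS
    · intro i hi
      rw [Finset.mem_insert] at hi
      push_neg at hi
      rw [Function.update_of_ne hi.1]
      exact hg2 i hi.2
    · intro e he
      rw [himg]
      exact hgood e he
  · intro p hp q hq hpq
    rw [Finset.mem_coe] at hp hq
    rw [wwGood, @Finset.mem_filter _ _ (Classical.decPred _), mem_wwPair, mem_wwPhi] at hp hq
    have h2 : p.2 = q.2 := by
      have := congrFun hpq j
      simpa using this
    have h1 : p.1 = q.1 := by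
      funext i
      by_cases hij : i = j
      · rw [hij, hp.1.1.2.1 j hj, hq.1.1.2.1 j hj]
      · have := congrFun hpq i
        simp only [] at this
        rwa [Function.update_of_ne hij, Function.update_of_ne hij] at this
    exact Prod.ext h1 h2

private lemma ww_badE_card {E : Set (Finset V)} {f : V → ι} {v₀ : V} {S : Finset ι} {j : ι}
    (hj : j ∉ S) {e : Finset V} (he : e ∈ E)
    (hne : (wwBadE E f v₀ S j e).Nonempty) :
    ∃ B : Finset ι, B ⊆ S ∧ B.card = e.card - 1 ∧
      (wwBadE E f v₀ S j e).card ≤ (wwPhi E f v₀ (S \ B)).card := by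
  classical
  obtain ⟨p₀, hp₀⟩ := hne
  rw [mem_wwBadE, mem_wwPair] at hp₀
  obtain ⟨⟨hg₀, hv₀⟩, hsub₀⟩ := hp₀
  obtain ⟨hstr, hw₀, hprops₀⟩ := ww_edge_props hj hg₀ hv₀ he hsub₀
  set w : V := p₀.2 with hw
  refine ⟨(e.erase w).image f, ?_, ?_, ?_⟩
  · intro i hi
    rw [Finset.mem_image] at hi
    obtain ⟨u, hu, rfl⟩ := hi
    rw [Finset.mem_erase] at hu
    exact (hprops₀ u hu.2 hu.1).1
  · rw [Finset.card_image_of_injOn, Finset.card_erase_of_mem hw₀]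
    intro a ha b hb hfab
    by_contra hab
    exact hstr a (by simpa using (Finset.mem_erase.1 ha).2)
      b (by simpa using (Finset.mem_erase.1 hb).2) hab hfab
  · set B : Finset ι := (e.erase w).image f with hB
    apply Finset.card_le_card_of_injOn (fun p => fun i => if i ∈ B then v₀ else p.1 i)
    · intro p hp
      rw [Finset.mem_coe, mem_wwBadE, mem_wwPair] at hp
      obtain ⟨⟨hg, hv⟩, hsub⟩ := hp
      simp only [Finset.mem_coe]
      rw [mem_wwPhi] at hg ⊢
      obtain ⟨hg1, hg2, hg3⟩ := hg
      refine ⟨?_, ?_, ?_⟩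
      · intro i hi
        rw [Finset.mem_sdiff] at hi
        rw [if_neg hi.2]
        exact hg1 i hi.1
      · intro i hi
        by_cases hiB : i ∈ B
        · rw [if_pos hiB]
        · rw [if_neg hiB]
          rw [Finset.mem_sdiff] at hi
          push_neg at hi
          exact hg2 i (fun hiS => hiB (hi hiS))
      · intro e' he' hsub'
        refine hg3 e' he' (fun x hx => ?_)
        obtain ⟨i, hi, hxi⟩ := hsub' hx
        rw [Finset.coe_sdiff, Set.mem_diff] at hi
        simp only [if_neg (fun h => hi.2 (Finset.mem_coe.2 h))] at hxi
        exact ⟨i, hi.1, hxi⟩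
    · intro p hp q hq hpq
      rw [Finset.mem_coe, mem_wwBadE, mem_wwPair] at hp hq
      obtain ⟨⟨hgp, hvp⟩, hsubp⟩ := hp
      obtain ⟨⟨hgq, hvq⟩, hsubq⟩ := hq
      obtain ⟨-, hwp, hpropsp⟩ := ww_edge_props hj hgp hvp he hsubp
      obtain ⟨-, hwq, hpropsq⟩ := ww_edge_props hj hgq hvq he hsubq
      have hp2 : p.2 = w := by
        by_contra hne'
        exact hstr p.2 hwp w hw₀ hne' (by rw [hvp, hv₀])
      have hq2 : q.2 = w := by
        by_contra hne'
        exact hstr q.2 hwq w hw₀ hne' (by rw [hvq, hv₀])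
      have h1 : p.1 = q.1 := by
        funext i
        have hcf := congrFun hpq i
        simp only [] at hcf
        by_cases hiB : i ∈ B
        · rw [hB, Finset.mem_image] at hiB
          obtain ⟨u, hu, rfl⟩ := hiB
          rw [Finset.mem_erase] at hu
          have hup : (p.1) (f u) = u :=
            (hpropsp u hu.2 (fun h => hu.1 (h.trans hp2))).2
          have huq : (q.1) (f u) = u :=
            (hpropsq u hu.2 (fun h => hu.1 (h.trans hq2))).2
          rw [hup, huq]
        · rwa [if_neg hiB, if_neg hiB] at hcf
      exact Prod.ext h1 (hp2.trans hq2.symm)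

private lemma ww_insert_sdiff {S B : Finset ι} {b : ι} (hbS : b ∈ S) (hbB : b ∈ B) :
    insert b (S \ B) = S \ B.erase b := by
  ext i
  simp only [Finset.mem_insert, Finset.mem_sdiff, Finset.mem_erase]
  constructor
  · rintro (rfl | ⟨hiS, hiB⟩)
    · exact ⟨hbS, fun h => h.1 rfl⟩
    · exact ⟨hiS, fun h => hiB h.2⟩
  · rintro ⟨hiS, h⟩
    by_cases hib : i = b
    · exact Or.inl hib
    · exact Or.inr ⟨hiS, fun hiB => h ⟨hib, hiB⟩⟩

private lemma ww_chain {E : Set (Finset V)} {f : V → ι} {v₀ : V} {β : ℝ} (hβ : 0 ≤ β)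
    {S : Finset ι}
    (H : ∀ S' : Finset ι, S' ⊂ S → ∀ j ∉ S',
      β * ((wwPhi E f v₀ S').card : ℝ) ≤ ((wwPhi E f v₀ (insert j S')).card : ℝ)) :
    ∀ B ⊆ S, β ^ B.card * ((wwPhi E f v₀ (S \ B)).card : ℝ) ≤ ((wwPhi E f v₀ S).card : ℝ) := by
  suffices h : ∀ (n : ℕ) (B : Finset ι), B.card = n → B ⊆ S →
      β ^ n * ((wwPhi E f v₀ (S \ B)).card : ℝ) ≤ ((wwPhi E f v₀ S).card : ℝ) by
    intro B hBS
    exact h B.card B rfl hBS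
  intro n
  induction n with
  | zero =>
    intro B hn hBS
    rw [Finset.card_eq_zero] at hn
    subst hn
    simp
  | succ n ih =>
    intro B hn hBS
    obtain ⟨b, hb⟩ : B.Nonempty := Finset.card_pos.1 (by omega)
    have hbS : b ∈ S := hBS hb
    have hstep : β * ((wwPhi E f v₀ (S \ B)).card : ℝ) ≤
        ((wwPhi E f v₀ (S \ B.erase b)).card : ℝ) := by
      rw [← ww_insert_sdiff hbS hb]
      refine H (S \ B) ?_ b (by simp [hb])
      exact Finset.sdiff_ssubset hBS ⟨b, hb⟩
    have herase : (B.erase b).card = n := by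
      rw [Finset.card_erase_of_mem hb, hn]
      omega
    calc β ^ (n + 1) * ((wwPhi E f v₀ (S \ B)).card : ℝ)
        = β ^ n * (β * ((wwPhi E f v₀ (S \ B)).card : ℝ)) := by ring
      _ ≤ β ^ n * ((wwPhi E f v₀ (S \ B.erase b)).card : ℝ) := by
          exact mul_le_mul_of_nonneg_left hstep (pow_nonneg hβ n)
      _ ≤ ((wwPhi E f v₀ S).card : ℝ) := by
          exact ih (B.erase b) herase (Finset.Subset.trans (Finset.erase_subset _ _) hBS)

private noncomputable def wwD (E : Set (Finset V)) (f : V → ι) (j : ι) : Finset (Finset V) :=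
  @Finset.filter _ (fun e => e ∈ E ∧ (∀ v ∈ e, ∀ w ∈ e, v ≠ w → f v ≠ f w) ∧ ∃ v ∈ e, f v = j)
    (Classical.decPred _) Finset.univ

private lemma mem_wwD {E : Set (Finset V)} {f : V → ι} {j : ι} {e : Finset V} :
    e ∈ wwD E f j ↔ e ∈ E ∧ (∀ v ∈ e, ∀ w ∈ e, v ≠ w → f v ≠ f w) ∧ ∃ v ∈ e, f v = j := by
  rw [wwD]
  rw [@Finset.mem_filter _ _ (Classical.decPred _)]
  simp

private lemma ww_main {E : Set (Finset V)} {f : V → ι} {v₀ : V} {r t : ℕ} (hr : 2 ≤ r)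
    (ht : 1 ≤ t) (hE : ∀ e ∈ E, e.card = r)
    (hthick : ∀ i : ι, t ≤ (wwVj f i).card)
    (hdeg : ∀ i : ι, ((wwD E f i).card : ℝ) ≤
        ((r : ℝ) - 1) ^ (r - 1) / (r : ℝ) ^ r * (t : ℝ) ^ (r - 1) * ((wwVj f i).card : ℝ)) :
    ∀ (n : ℕ) (S : Finset ι), S.card = n → ∀ j ∉ S,
      ((r : ℝ) - 1) * t / r * ((wwPhi E f v₀ S).card : ℝ) ≤
        ((wwPhi E f v₀ (insert j S)).card : ℝ) := by
  classical
  have hr2 : (2 : ℝ) ≤ (r : ℝ) := by exact_mod_cast hr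
  have hrpos : (0 : ℝ) < (r : ℝ) := by linarith
  have hr1 : (0 : ℝ) < (r : ℝ) - 1 := by linarith
  have htpos : (0 : ℝ) < (t : ℝ) := by exact_mod_cast Nat.lt_of_lt_of_le Nat.zero_lt_one ht
  set β : ℝ := ((r : ℝ) - 1) * t / r with hβdef
  have hβpos : 0 < β := by positivity
  have hβr : (0 : ℝ) < β ^ (r - 1) := pow_pos hβpos _
  intro n
  induction n using Nat.strong_induction_on with
  | _ n ih =>
  intro S hS j hj
  set NS : ℝ := ((wwPhi E f v₀ S).card : ℝ) with hNS
  set NS' : ℝ := ((wwPhi E f v₀ (insert j S)).card : ℝ) with hNS'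
  set m : ℝ := ((wwVj f j).card : ℝ) with hm
  have hNS0 : 0 ≤ NS := by positivity
  have htm : (t : ℝ) ≤ m := by rw [hm]; exact_mod_cast hthick j
  -- covering of the pair set
  have hcover : wwPair E f v₀ S j ⊆
      wwGood E f v₀ S j ∪ (wwD E f j).biUnion (fun e => wwBadE E f v₀ S j e) := by
    intro p hp
    by_cases hgood : ∀ e ∈ E, ¬ ((e : Set V) ⊆ insert p.2 (p.1 '' ↑S))
    · apply Finset.mem_union_left
      rw [wwGood, @Finset.mem_filter _ _ (Classical.decPred _)]
      exact ⟨hp, hgood⟩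
    · push_neg at hgood
      obtain ⟨e, he, hsub⟩ := hgood
      apply Finset.mem_union_right
      rw [Finset.mem_biUnion]
      obtain ⟨hg, hv⟩ := mem_wwPair.1 hp
      obtain ⟨hstr, hve, -⟩ := ww_edge_props hj hg hv he hsub
      refine ⟨e, mem_wwD.2 ⟨he, hstr, p.2, hve, hv⟩, mem_wwBadE.2 ⟨hp, hsub⟩⟩
  have hsplit : (wwPhi E f v₀ S).card * (wwVj f j).card ≤
      (wwGood E f v₀ S j).card + ∑ e ∈ wwD E f j, (wwBadE E f v₀ S j e).card := by
    calc (wwPhi E f v₀ S).card * (wwVj f j).card = (wwPair E f v₀ S j).card := by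
          rw [wwPair, Finset.card_product]
      _ ≤ (wwGood E f v₀ S j ∪ (wwD E f j).biUnion (fun e => wwBadE E f v₀ S j e)).card :=
          Finset.card_le_card hcover
      _ ≤ (wwGood E f v₀ S j).card + ((wwD E f j).biUnion (fun e => wwBadE E f v₀ S j e)).card :=
          Finset.card_union_le _ _
      _ ≤ _ := by
          gcongr
          exact Finset.card_biUnion_le
  -- bound each bad set
  have hbadE : ∀ e ∈ wwD E f j, ((wwBadE E f v₀ S j e).card : ℝ) ≤ NS / β ^ (r - 1) := by
    intro e heD
    rcases (wwBadE E f v₀ S j e).eq_empty_or_nonempty with hemp | hne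
    · rw [hemp]
      simp only [Finset.card_empty, Nat.cast_zero]
      positivity
    · obtain ⟨heE, hstr, hmeet⟩ := mem_wwD.1 heD
      obtain ⟨B, hBS, hBcard, hle⟩ := ww_badE_card hj heE hne
      have hBr : B.card = r - 1 := by rw [hBcard, hE e heE]
      have hchain : β ^ (r - 1) * ((wwPhi E f v₀ (S \ B)).card : ℝ) ≤ NS := by
        rw [← hBr]
        refine ww_chain (le_of_lt hβpos) (fun S' hS' j' hj' => ?_) B hBS
        exact ih S'.card (hS ▸ Finset.card_lt_card hS') S' rfl j' hj'
      rw [le_div_iff₀ hβr]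
      calc ((wwBadE E f v₀ S j e).card : ℝ) * β ^ (r - 1)
          ≤ ((wwPhi E f v₀ (S \ B)).card : ℝ) * β ^ (r - 1) :=
            mul_le_mul_of_nonneg_right (by exact_mod_cast hle) (le_of_lt hβr)
        _ ≤ NS := by rw [mul_comm]; exact hchain
  -- sum of bad bounds
  have hsum : (∑ e ∈ wwD E f j, ((wwBadE E f v₀ S j e).card : ℝ)) ≤
      ((wwD E f j).card : ℝ) * (NS / β ^ (r - 1)) := by
    calc (∑ e ∈ wwD E f j, ((wwBadE E f v₀ S j e).card : ℝ))
        ≤ ∑ _e ∈ wwD E f j, NS / β ^ (r - 1) := Finset.sum_le_sum hbadE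
      _ = ((wwD E f j).card : ℝ) * (NS / β ^ (r - 1)) := by
          rw [Finset.sum_const, nsmul_eq_mul]
  -- the key numeric identity
  have hrr : (r : ℝ) ^ r = (r : ℝ) ^ (r - 1) * (r : ℝ) := by
    rw [← pow_succ]
    congr 1
    omega
  have hkey : ((r : ℝ) - 1) ^ (r - 1) / (r : ℝ) ^ r * (t : ℝ) ^ (r - 1) = β ^ (r - 1) / r := by
    rw [hβdef, div_pow, mul_pow, hrr]
    field_simp
    all_goals ring
  -- assemble
  have e1 : NS * m ≤ NS' + ∑ e ∈ wwD E f j, ((wwBadE E f v₀ S j e).card : ℝ) := by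
    have hgc : ((wwGood E f v₀ S j).card : ℝ) ≤ NS' := by
      rw [hNS']
      exact Nat.cast_le.mpr (ww_good_card hj)
    have hcast : (((wwPhi E f v₀ S).card * (wwVj f j).card : ℕ) : ℝ) ≤
        (((wwGood E f v₀ S j).card + ∑ e ∈ wwD E f j, (wwBadE E f v₀ S j e).card : ℕ) : ℝ) :=
      Nat.cast_le.mpr hsplit
    push_cast at hcast
    rw [hNS, hm]
    linarith
  have e2 : (∑ e ∈ wwD E f j, ((wwBadE E f v₀ S j e).card : ℝ)) ≤ m * NS / r := by
    have hD := hdeg j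
    have h3 : ((wwD E f j).card : ℝ) * (NS / β ^ (r - 1)) ≤
        (β ^ (r - 1) / r * m) * (NS / β ^ (r - 1)) := by
      apply mul_le_mul_of_nonneg_right _ (by positivity)
      calc ((wwD E f j).card : ℝ) ≤ ((r : ℝ) - 1) ^ (r - 1) / (r : ℝ) ^ r * (t : ℝ) ^ (r - 1) * m :=
            hD
        _ = β ^ (r - 1) / r * m := by rw [hkey]
    have h4 : (β ^ (r - 1) / r * m) * (NS / β ^ (r - 1)) = m * NS / r := by
      field_simp
      all_goals ring
    calc (∑ e ∈ wwD E f j, ((wwBadE E f v₀ S j e).card : ℝ))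
        ≤ ((wwD E f j).card : ℝ) * (NS / β ^ (r - 1)) := hsum
      _ ≤ (β ^ (r - 1) / r * m) * (NS / β ^ (r - 1)) := h3
      _ = m * NS / r := h4
  have e3 : m * NS * (((r : ℝ) - 1) / r) ≤ NS' := by
    have : NS * m - m * NS / r = m * NS * (((r : ℝ) - 1) / r) := by
      field_simp
      all_goals ring
    linarith
  calc ((r : ℝ) - 1) * t / r * NS = (t : ℝ) * (NS * (((r : ℝ) - 1) / r)) := by ring
    _ ≤ m * (NS * (((r : ℝ) - 1) / r)) := by
        apply mul_le_mul_of_nonneg_right htm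
        positivity
    _ = m * NS * (((r : ℝ) - 1) / r) := by ring
    _ ≤ NS' := e3

end WW

/-- Wanless–Wood for hypergraphs: if `G` is `r`-uniform, the partition (fibers of `f`)
is `t`-thick, and each block `Vᵢ` meets at most `((r-1)^(r-1)/r^r)·t^(r-1)·|Vᵢ|`
stretched edges, then there are at least `((r-1)/r)^n · t^n` independent transversals,
where `n` is the number of blocks. -/
theorem stmt_9 {V ι : Type*} [Fintype V] [Fintype ι] (r t : ℕ) (hr : 2 ≤ r) (ht : 1 ≤ t)
    (E : Set (Finset V)) (hE : ∀ e ∈ E, e.card = r) (f : V → ι)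
    (hthick : ∀ i : ι, t ≤ (f ⁻¹' {i}).ncard)
    (hdeg : ∀ i : ι,
      ({e ∈ E | (∀ v ∈ e, ∀ w ∈ e, v ≠ w → f v ≠ f w) ∧ ∃ v ∈ e, f v = i}.ncard : ℝ) ≤
        ((r : ℝ) - 1) ^ (r - 1) / (r : ℝ) ^ r * (t : ℝ) ^ (r - 1) * ((f ⁻¹' {i}).ncard : ℝ)) :
    (((r : ℝ) - 1) / (r : ℝ)) ^ (Fintype.card ι) * (t : ℝ) ^ (Fintype.card ι) ≤
      ({T : ι → V | (∀ i, f (T i) = i) ∧ ∀ e ∈ E, ¬(e : Set V) ⊆ Set.range T}.ncard : ℝ) := by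
  classical
  have hr2 : (2 : ℝ) ≤ (r : ℝ) := by exact_mod_cast hr
  have hrpos : (0 : ℝ) < (r : ℝ) := by linarith
  have htpos : (0 : ℝ) < (t : ℝ) := by exact_mod_cast Nat.lt_of_lt_of_le Nat.zero_lt_one ht
  by_cases hι : Nonempty ι
  swap
  · -- the empty partition: exactly one (empty) transversal
    haveI : IsEmpty ι := not_nonempty_iff.1 hι
    have hset : {T : ι → V | (∀ i, f (T i) = i) ∧ ∀ e ∈ E, ¬(e : Set V) ⊆ Set.range T} =
        Set.univ := by
      ext T
      simp only [Set.mem_setOf_eq, Set.mem_univ, iff_true]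
      refine ⟨fun i => isEmptyElim i, fun e he hsub => ?_⟩
      have hcard : e.card = r := hE e he
      have : e.Nonempty := Finset.card_pos.1 (by omega)
      obtain ⟨x, hx⟩ := this
      obtain ⟨i, -⟩ := hsub (by exact_mod_cast hx)
      exact isEmptyElim i
    haveI : Unique (ι → V) :=
      ⟨⟨fun i => isEmptyElim i⟩, fun T => funext fun i => isEmptyElim i⟩
    rw [hset, Set.ncard_univ, Nat.card_unique]
    have hcι : Fintype.card ι = 0 := Fintype.card_eq_zero
    rw [hcι]
    simp
  · obtain ⟨i₀⟩ := hι
    have hfib : ∀ i : ι, f ⁻¹' {i} = ↑(wwVj f i) := by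
      intro i
      ext v
      simp [mem_wwVj]
    have hthick' : ∀ i : ι, t ≤ (wwVj f i).card := by
      intro i
      have := hthick i
      rwa [hfib i, Set.ncard_coe_finset] at this
    have hVne : (wwVj f i₀).Nonempty := by
      have := hthick' i₀
      exact Finset.card_pos.1 (by omega)
    obtain ⟨v₀, -⟩ := hVne
    have hDset : ∀ i : ι,
        {e ∈ E | (∀ v ∈ e, ∀ w ∈ e, v ≠ w → f v ≠ f w) ∧ ∃ v ∈ e, f v = i} = ↑(wwD E f i) := by
      intro i
      ext e
      simp only [mem_wwD, Set.mem_setOf_eq, Finset.mem_coe]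
      all_goals tauto
    have hdeg' : ∀ i : ι, ((wwD E f i).card : ℝ) ≤
        ((r : ℝ) - 1) ^ (r - 1) / (r : ℝ) ^ r * (t : ℝ) ^ (r - 1) * ((wwVj f i).card : ℝ) := by
      intro i
      have := hdeg i
      rwa [hDset i, Set.ncard_coe_finset, hfib i, Set.ncard_coe_finset] at this
    set β : ℝ := ((r : ℝ) - 1) * t / r with hβdef
    have hβpos : 0 < β := by
      have : (0:ℝ) < (r:ℝ) - 1 := by linarith
      positivity
    have hmain := ww_main (E := E) (f := f) (v₀ := v₀) hr ht hE hthick' hdeg'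
    have hchain := ww_chain (E := E) (f := f) (v₀ := v₀) (le_of_lt hβpos)
      (S := (Finset.univ : Finset ι))
      (fun S' _ j hj => hmain S'.card S' rfl j hj)
      Finset.univ (Finset.Subset.refl _)
    rw [Finset.sdiff_self] at hchain
    have hempty : (wwPhi E f v₀ (∅ : Finset ι)).card = 1 := by
      apply wwPhi_empty
      intro e he h
      have := hE e he
      rw [h] at this
      simp at this
      omega
    rw [hempty, Finset.card_univ] at hchain
    have hsetuniv : {T : ι → V | (∀ i, f (T i) = i) ∧ ∀ e ∈ E, ¬(e : Set V) ⊆ Set.range T} =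
        ↑(wwPhi E f v₀ (Finset.univ : Finset ι)) := by
      ext g
      rw [Set.mem_setOf_eq, Finset.mem_coe, mem_wwPhi]
      simp [Set.image_univ]
    rw [hsetuniv, Set.ncard_coe_finset]
    calc (((r : ℝ) - 1) / (r : ℝ)) ^ (Fintype.card ι) * (t : ℝ) ^ (Fintype.card ι)
        = β ^ (Fintype.card ι) := by
          rw [← mul_pow, hβdef]
          congr 1
          ring
      _ ≤ ((wwPhi E f v₀ (Finset.univ : Finset ι)).card : ℝ) := by
          simpa using hchain
end

section
/- For every real β > 0 there exist a finite simple graph G and a partition 𝒫 of its vertex set such that every block B ∈ 𝒫 satisfies: the number of edges of G with at least one endpoint in B is at most β·|B|², and there is no independent transversal of 𝒫 in G. (Concretely, for a large integer k one may take G to be the disjoint union of k² stars S₁, …, S_{k²}, each with k+1 vertices, with 𝒫 consisting of the block V₀ of all star centers together with, for each i, the block V_i of the k leaves of S_i; then each block B is incident with at most |B|²/k edges and 𝒫 has no independent transversal.) -/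
def SG (n k : ℕ) : SimpleGraph (Fin n × Fin (k+1)) where
  Adj a b := a.1 = b.1 ∧ ((a.2 = 0 ∧ b.2 ≠ 0) ∨ (a.2 ≠ 0 ∧ b.2 = 0))
  symm := ⟨fun a b => by tauto⟩
  loopless := ⟨fun a => by simp⟩

def ff (n k : ℕ) : Fin n × Fin (k+1) → Option (Fin n) :=
  fun p => if p.2 = 0 then none else some p.1

theorem pre_none (n k : ℕ) : (ff n k ⁻¹' {none}) = (fun i : Fin n => (i, 0)) '' Set.univ := by
  ext ⟨a, b⟩
  simp only [ff, Set.mem_preimage, Set.mem_singleton_iff, Set.image_univ, Set.mem_range,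
    Prod.mk.injEq]
  constructor
  · intro h
    split at h
    · next hb => exact ⟨a, rfl, hb.symm⟩
    · simp at h
  · rintro ⟨x, rfl, rfl⟩
    simp

theorem pre_some (n k : ℕ) (i : Fin n) :
    (ff n k ⁻¹' {some i}) = (fun j : Fin k => (i, j.succ)) '' Set.univ := by
  ext ⟨a, b⟩
  simp only [ff, Set.mem_preimage, Set.mem_singleton_iff, Set.image_univ, Set.mem_range,
    Prod.mk.injEq]
  constructor
  · intro h
    split at h
    · simp at h
    · next hb =>
      simp only [Option.some.injEq] at h
      obtain ⟨j, hj⟩ := Fin.exists_succ_eq.mpr hb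
      exact ⟨j, h.symm, hj⟩
  · rintro ⟨x, rfl, rfl⟩
    simp [Fin.succ_ne_zero]

theorem ncard_pre_none (n k : ℕ) : (ff n k ⁻¹' {none}).ncard = n := by
  rw [pre_none, Set.ncard_image_of_injective _ (fun a b h => by simpa [Prod.ext_iff] using h),
    Set.ncard_univ, Nat.card_eq_fintype_card, Fintype.card_fin]

theorem ncard_pre_some (n k : ℕ) (i : Fin n) : (ff n k ⁻¹' {some i}).ncard = k := by
  rw [pre_some, Set.ncard_image_of_injective _ (fun a b h => by
      simpa [Prod.ext_iff, Fin.succ_inj] using h),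
    Set.ncard_univ, Nat.card_eq_fintype_card, Fintype.card_fin]

theorem edge_sub_all (n k : ℕ) :
    (SG n k).edgeSet ⊆ (fun p : Fin n × Fin (k+1) => s((p.1, 0), (p.1, p.2))) '' Set.univ := by
  intro e he
  induction e with
  | h a b =>
    rw [SimpleGraph.mem_edgeSet] at he
    obtain ⟨h1, h2⟩ := he
    simp only [Set.image_univ, Set.mem_range]
    rcases h2 with ⟨ha, hb⟩ | ⟨ha, hb⟩
    · exact ⟨(a.1, b.2), by rw [show ((a.1, 0) : Fin n × Fin (k+1)) = a by ext <;> simp [ha],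
        show ((a.1, b.2) : Fin n × Fin (k+1)) = b by ext <;> simp [h1]]⟩
    · refine ⟨(b.1, a.2), ?_⟩
      rw [show ((b.1, 0) : Fin n × Fin (k+1)) = b by ext <;> simp [hb],
        show ((b.1, a.2) : Fin n × Fin (k+1)) = a by ext <;> simp [h1], Sym2.eq_swap]

theorem edge_sub_some (n k : ℕ) (i : Fin n) :
    {e ∈ (SG n k).edgeSet | ∃ v ∈ e, ff n k v = some i} ⊆
      (fun j : Fin (k+1) => s((i, 0), (i, j))) '' Set.univ := by
  rintro e ⟨he, v, hv, hfv⟩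
  induction e with
  | h a b =>
    rw [SimpleGraph.mem_edgeSet] at he
    obtain ⟨h1, h2⟩ := he
    have hvi : v.1 = i := by
      unfold ff at hfv
      split at hfv
      · simp at hfv
      · simpa using hfv
    have hab : a.1 = i := by
      rw [Sym2.mem_iff] at hv
      rcases hv with rfl | rfl
      · exact hvi
      · exact h1.trans hvi
    simp only [Set.image_univ, Set.mem_range]
    rcases h2 with ⟨ha, hb⟩ | ⟨ha, hb⟩
    · exact ⟨b.2, by rw [show ((i, 0) : Fin n × Fin (k+1)) = a by ext <;> simp [ha, hab],
        show ((i, b.2) : Fin n × Fin (k+1)) = b by ext <;> simp [← h1, hab]]⟩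
    · refine ⟨a.2, ?_⟩
      rw [show ((i, 0) : Fin n × Fin (k+1)) = b by ext <;> simp [hb, ← h1, hab],
        show ((i, a.2) : Fin n × Fin (k+1)) = a by ext <;> simp [hab], Sym2.eq_swap]

theorem no_transversal (n k : ℕ) :
    ¬∃ T : Option (Fin n) → Fin n × Fin (k+1), (∀ i, ff n k (T i) = i) ∧
      ∀ i j, ¬(SG n k).Adj (T i) (T j) := by
  rintro ⟨T, hT, hI⟩
  have h0 : (T none).2 = 0 := by
    have := hT none
    unfold ff at this
    split at this
    · assumption
    · simp at this
  set i := (T none).1 with hi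
  have h1 : (T (some i)).2 ≠ 0 ∧ (T (some i)).1 = i := by
    have := hT (some i)
    unfold ff at this
    split at this
    · simp at this
    · exact ⟨by assumption, by simpa using this⟩
  exact hI none (some i) ⟨h1.2.symm, Or.inl ⟨h0, h1.1⟩⟩

/-- For every `β > 0` there is a graph `G` with a vertex partition (fibers of a
surjective `f : V → ι`) such that every block `B` is incident with at most `β·|B|²`
edges, yet there is no independent transversal. -/
theorem stmt_11 (β : ℝ) (hβ : 0 < β) :
    ∃ (V ι : Type) (_ : Fintype V) (_ : Fintype ι) (G : SimpleGraph V) (f : V → ι),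
      Function.Surjective f ∧
      (∀ i : ι,
        ({e ∈ G.edgeSet | ∃ v ∈ e, f v = i}.ncard : ℝ) ≤ β * ((f ⁻¹' {i}).ncard : ℝ) ^ 2) ∧
      ¬∃ T : ι → V, (∀ i, f (T i) = i) ∧ ∀ i j, ¬G.Adj (T i) (T j) := by
  set k : ℕ := ⌈2/β⌉₊ + 1 with hkdef
  have hk1 : 1 ≤ k := by omega
  have hkR : (2:ℝ)/β ≤ (k : ℝ) := by
    calc (2:ℝ)/β ≤ (⌈2/β⌉₊ : ℝ) := Nat.le_ceil _
    _ ≤ k := by exact_mod_cast Nat.le_succ _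
  have hkpos : (0:ℝ) < k := by positivity
  have hβk : (2:ℝ) ≤ β * k := by
    rw [div_le_iff₀ hβ] at hkR
    linarith
  have key : ((k:ℝ) + 1) ≤ β * (k:ℝ)^2 := by
    have : β * (k:ℝ)^2 = (β * k) * k := by ring
    rw [this]
    have h1R : (1:ℝ) ≤ k := by exact_mod_cast hk1
    nlinarith [mul_le_mul_of_nonneg_right hβk (le_of_lt hkpos)]
  refine ⟨Fin (k*k) × Fin (k+1), Option (Fin (k*k)), inferInstance, inferInstance,
    SG (k*k) k, ff (k*k) k, ?_, ?_, no_transversal _ _⟩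
  · rintro (_ | j)
    · exact ⟨(⟨0, Nat.mul_pos hk1 hk1⟩, 0), by simp [ff]⟩
    · exact ⟨(j, ⟨1, by omega⟩), by simp [ff, Fin.ext_iff]⟩
  · intro i
    match i with
    | none =>
      have hle : {e ∈ (SG (k*k) k).edgeSet | ∃ v ∈ e, ff (k*k) k v = none}.ncard ≤ k*k*(k+1) := by
        calc {e ∈ (SG (k*k) k).edgeSet | ∃ v ∈ e, ff (k*k) k v = none}.ncard
            ≤ ((fun p : Fin (k*k) × Fin (k+1) => s((p.1, 0), (p.1, p.2))) '' Set.univ).ncard := by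
              apply Set.ncard_le_ncard _ (Set.toFinite _)
              exact fun e he => edge_sub_all (k*k) k he.1
          _ ≤ (Set.univ : Set (Fin (k*k) × Fin (k+1))).ncard := Set.ncard_image_le (Set.toFinite _)
          _ = k*k*(k+1) := by simp [Set.ncard_univ]
      rw [ncard_pre_none]
      calc ({e ∈ (SG (k*k) k).edgeSet | ∃ v ∈ e, ff (k*k) k v = none}.ncard : ℝ)
          ≤ (k:ℝ)*k*(k+1) := by exact_mod_cast hle
        _ ≤ β * ((k:ℝ)*k)^2 := by nlinarith [mul_le_mul_of_nonneg_left key (mul_nonneg hkpos.le hkpos.le)]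
        _ = β * (((k*k : ℕ)):ℝ)^2 := by push_cast; ring
    | some i =>
      have hle : {e ∈ (SG (k*k) k).edgeSet | ∃ v ∈ e, ff (k*k) k v = some i}.ncard ≤ k+1 := by
        calc {e ∈ (SG (k*k) k).edgeSet | ∃ v ∈ e, ff (k*k) k v = some i}.ncard
            ≤ ((fun j : Fin (k+1) => s((i, 0), (i, j))) '' Set.univ).ncard :=
              Set.ncard_le_ncard (edge_sub_some (k*k) k i) (Set.toFinite _)
          _ ≤ (Set.univ : Set (Fin (k+1))).ncard := Set.ncard_image_le (Set.toFinite _)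
          _ = k+1 := by simp [Set.ncard_univ]
      rw [ncard_pre_some]
      calc ({e ∈ (SG (k*k) k).edgeSet | ∃ v ∈ e, ff (k*k) k v = some i}.ncard : ℝ)
          ≤ (k:ℝ)+1 := by exact_mod_cast hle
        _ ≤ β * (k:ℝ)^2 := key
end
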